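/- arXiv:2303.04021 — 12 statements merged into one kernel-verified Lean document; each statement's English description precedes it below -/
import Mathlib

section
/- Let P ⊆ ℝ^m be a rational polytope, i.e. a bounded set of the form P = {x ∈ ℝ^m : A x^T ≤ b^T} with A a rational ℓ×m matrix and b a rational vector, and let f: ℝ^m → ℝ^k be a linear map whose matrix with respect to the standard bases has rational entries. Then f(P ∩ ℚ^m) = f(P) ∩ ℚ^k. -/
open Matrix

/-- Coercion of a rational `mulVec` to the reals. -/
lemma ratCast_mulVec {ι κ : Type*} [Fintype κ] (M : Matrix ι κ ℚ) (v : κ → ℚ) :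
    (M.map (fun q : ℚ => (q : ℝ))).mulVec (fun j => ((v j : ℝ))) =
      fun i => ((M.mulVec v i : ℚ) : ℝ) := by
  funext i
  simp only [Matrix.mulVec, dotProduct, Matrix.map_apply]
  push_cast
  rfl

/-- Every square matrix over `ℚ` has a weak generalized inverse. -/
lemma exists_geninv {κ : Type*} [Fintype κ] [DecidableEq κ] (N : Matrix κ κ ℚ) :
    ∃ G : Matrix κ κ ℚ, N * G * N = N := by
  classical
  set E : (κ → ℚ) →ₗ[ℚ] (κ → ℚ) := Matrix.toLin' N with hE
  obtain ⟨W, hW⟩ := (LinearMap.ker E).exists_isCompl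
  have hinj : LinearMap.ker (E ∘ₗ W.subtype) = ⊥ := by
    rw [LinearMap.ker_eq_bot]
    intro x y hxy
    have hx : (x : κ → ℚ) - y ∈ LinearMap.ker E := by
      simp only [LinearMap.mem_ker, map_sub]
      simpa [sub_eq_zero] using hxy
    have hx2 : (x : κ → ℚ) - y ∈ W := sub_mem x.2 y.2
    have := Submodule.disjoint_def.mp hW.disjoint _ hx hx2
    exact Subtype.ext (sub_eq_zero.mp this)
  obtain ⟨h, hh⟩ := (E ∘ₗ W.subtype).exists_leftInverse_of_injective hinj
  set G' : (κ → ℚ) →ₗ[ℚ] (κ → ℚ) := W.subtype ∘ₗ h with hG'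
  have hkey : E ∘ₗ G' ∘ₗ E = E := by
    apply LinearMap.ext
    intro x
    have hx : x ∈ (LinearMap.ker E) ⊔ W := by rw [hW.sup_eq_top]; trivial
    obtain ⟨u, hu, w, hw, rfl⟩ := Submodule.mem_sup.mp hx
    have hEu : E u = 0 := hu
    have hGw : G' (E w) = w := by
      have h2 := LinearMap.ext_iff.mp hh ⟨w, hw⟩
      have h3 := congrArg (W.subtype) h2
      simpa [G', LinearMap.comp_apply] using h3
    simp [LinearMap.comp_apply, map_add, hEu, hGw]
  refine ⟨LinearMap.toMatrix' G', Matrix.toLin'.injective ?_⟩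
  rw [Matrix.toLin'_mul, Matrix.toLin'_mul, Matrix.toLin'_toMatrix', ← hE]
  exact hkey

/-- entrywise cast commutes with matrix product -/
lemma ratCast_map_mul {ι κ σ : Type*} [Fintype κ] (A : Matrix ι κ ℚ) (B : Matrix κ σ ℚ) :
    (A * B).map (fun q : ℚ => (q : ℝ)) =
      A.map (fun q : ℚ => (q : ℝ)) * B.map (fun q : ℚ => (q : ℝ)) := by
  ext i j
  simp only [Matrix.map_apply, Matrix.mul_apply]
  push_cast
  rfl

/-- A rational linear system with a real solution has rational solutions,
dense near any real solution. -/
lemma ratSol_dense {ι κ : Type*} [Fintype ι] [Fintype κ] [DecidableEq κ]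
    (M : Matrix ι κ ℚ) (c : ι → ℚ) (x₀ : κ → ℝ)
    (hx₀ : (M.map (fun q : ℚ => (q : ℝ))).mulVec x₀ = fun i => ((c i : ℝ))) :
    x₀ ∈ closure {x : κ → ℝ |
      ∃ q : κ → ℚ, M.mulVec q = c ∧ x = fun j => ((q j : ℝ))} := by
  classical
  set φ : ℚ → ℝ := fun q => (q : ℝ) with hφ
  set N : Matrix κ κ ℚ := Mᵀ * M with hN
  -- Step 1: a rational solution q₀
  have hrange : LinearMap.range N.mulVecLin = LinearMap.range Mᵀ.mulVecLin := by
    have hle : LinearMap.range N.mulVecLin ≤ LinearMap.range Mᵀ.mulVecLin := by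
      rw [hN, Matrix.mulVecLin_mul]
      exact LinearMap.range_comp_le_range _ _
    refine Submodule.eq_of_le_of_finrank_eq hle ?_
    have h1 : (N).rank = (Mᵀ).rank := by
      rw [hN, Matrix.rank_transpose_mul_self, Matrix.rank_transpose]
    simpa [Matrix.rank] using h1
  obtain ⟨z, hz⟩ : ∃ z, N.mulVec z = Mᵀ.mulVec c := by
    have : Mᵀ.mulVec c ∈ LinearMap.range Mᵀ.mulVecLin := ⟨c, rfl⟩
    rw [← hrange] at this
    exact this
  have hq₀ : M.mulVec z = c := by
    set v : ι → ℝ := fun i => (φ (M.mulVec z i)) - φ (c i) with hv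
    have hMt : (Mᵀ.map φ).mulVec v = 0 := by
      have e1 : (Mᵀ.map φ).mulVec (fun i => φ (M.mulVec z i)) =
          fun j => φ (Mᵀ.mulVec (M.mulVec z) j) := ratCast_mulVec _ _
      have e2 : (Mᵀ.map φ).mulVec (fun i => φ (c i)) =
          fun j => φ (Mᵀ.mulVec c j) := ratCast_mulVec _ _
      have e3 : Mᵀ.mulVec (M.mulVec z) = Mᵀ.mulVec c := by
        rw [Matrix.mulVec_mulVec, ← hN, hz]
      have e4 : (Mᵀ.map φ).mulVec v
          = (Mᵀ.map φ).mulVec (fun i => φ (M.mulVec z i))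
            - (Mᵀ.map φ).mulVec (fun i => φ (c i)) := by
        rw [← Matrix.mulVec_sub]; rfl
      rw [e4, e1, e2, e3, sub_self]
    have hvr : v = (M.map φ).mulVec ((fun j => φ (z j)) - x₀) := by
      rw [Matrix.mulVec_sub, ratCast_mulVec, hx₀]
      rfl
    have hvv : v ⬝ᵥ v = 0 := by
      nth_rewrite 2 [hvr]
      rw [Matrix.dotProduct_mulVec]
      have h4 : v ᵥ* (M.map φ) = 0 := by
        have : v ᵥ* (M.map φ) = (M.map φ)ᵀ *ᵥ v := by
          rw [← Matrix.vecMul_transpose, Matrix.transpose_transpose]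
        rw [this, ← Matrix.transpose_map]
        exact hMt
      rw [h4, zero_dotProduct]
    have hv0 : v = 0 := dotProduct_self_eq_zero.mp hvv
    funext i
    have := congrFun hv0 i
    simp only [hv, Pi.zero_apply, sub_eq_zero, hφ] at this
    exact_mod_cast this
  -- Step 2: projection matrix
  obtain ⟨G, hG⟩ := exists_geninv N
  set P : Matrix κ κ ℚ := 1 - G * N with hP
  have hNP : N * P = 0 := by
    rw [hP, Matrix.mul_sub, Matrix.mul_one, ← Matrix.mul_assoc, hG, sub_self]
  have hIP : (1 : Matrix κ κ ℚ) - P = G * N := by rw [hP, sub_sub_cancel]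
  have hMP : ∀ w : κ → ℚ, M.mulVec (P.mulVec w) = 0 := by
    intro w
    have hker : P.mulVec w ∈ LinearMap.ker N.mulVecLin := by
      simp only [LinearMap.mem_ker, Matrix.mulVecLin_apply, Matrix.mulVec_mulVec, hNP,
        Matrix.zero_mulVec]
    rw [hN, Matrix.ker_mulVecLin_transpose_mul_self] at hker
    simpa using hker
  -- the continuous retraction
  set q₀r : κ → ℝ := fun j => φ (z j) with hq₀r
  set Φ : (κ → ℝ) → (κ → ℝ) := fun x => q₀r + (P.map φ).mulVec (x - q₀r) with hΦ
  have hΦc : Continuous Φ := by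
    refine continuous_const.add ?_
    exact ((P.map φ).mulVecLin.continuous_on_pi).comp
      ((continuous_id.sub continuous_const))
  have hΦfix : Φ x₀ = x₀ := by
    have hNx : (N.map φ).mulVec (x₀ - q₀r) = 0 := by
      have e1 : (N.map φ) = (Mᵀ.map φ) * (M.map φ) := by
        rw [hN]; exact ratCast_map_mul _ _
      have e2 : (M.map φ).mulVec q₀r = fun i => φ (c i) := by
        rw [hq₀r, ratCast_mulVec, hq₀]
      rw [e1, ← Matrix.mulVec_mulVec, Matrix.mulVec_sub, hx₀, e2, sub_self,
        Matrix.mulVec_zero]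
    have h5 : ((1 : Matrix κ κ ℝ) - P.map φ).mulVec (x₀ - q₀r) = 0 := by
      have e3 : (1 : Matrix κ κ ℝ) - P.map φ = (G.map φ) * (N.map φ) := by
        ext i j
        have h := congrFun (congrFun hIP i) j
        simp only [Matrix.sub_apply, Matrix.one_apply, Matrix.mul_apply,
          Matrix.map_apply, hφ] at h ⊢
        by_cases hij : i = j <;> simp only [hij, if_true, if_false] at h ⊢ <;>
          exact_mod_cast h
      rw [e3, ← Matrix.mulVec_mulVec, hNx, Matrix.mulVec_zero]
    rw [Matrix.sub_mulVec, Matrix.one_mulVec] at h5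
    have h6 := sub_eq_zero.mp h5
    show q₀r + (P.map φ).mulVec (x₀ - q₀r) = x₀
    rw [← h6]
    abel
  -- rational vectors are dense
  have hdense : Dense {x : κ → ℝ | ∀ j, ∃ q : ℚ, x j = (q : ℝ)} := by
    have e : {x : κ → ℝ | ∀ j, ∃ q : ℚ, x j = (q : ℝ)} =
        Set.pi Set.univ (fun _ => Set.range φ) := by
      ext x; simp [Set.mem_pi, eq_comm, hφ]
    rw [e]
    exact dense_pi Set.univ (fun i _ => Rat.denseRange_cast)
  -- Φ maps rational vectors into the solution set
  have hΦmap : ∀ x ∈ {x : κ → ℝ | ∀ j, ∃ q : ℚ, x j = (q : ℝ)},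
      Φ x ∈ {x : κ → ℝ | ∃ q : κ → ℚ, M.mulVec q = c ∧ x = fun j => ((q j : ℝ))} := by
    rintro x hx
    choose r hr using hx
    refine ⟨z + P.mulVec (fun j => r j - z j), ?_, ?_⟩
    · rw [Matrix.mulVec_add, hq₀, hMP, add_zero]
    · have ex : x = fun j => φ (r j) := funext hr
      have e6 : x - q₀r = (fun j => ((r j - z j : ℚ) : ℝ)) := by
        funext j'
        simp only [ex, hq₀r, hφ, Pi.sub_apply]
        push_cast
        ring
      have e5 : (P.map φ).mulVec (fun j => ((r j - z j : ℚ) : ℝ)) =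
          fun j => ((P.mulVec (fun j => r j - z j) j : ℚ) : ℝ) :=
        ratCast_mulVec P _
      funext j
      show q₀r j + ((P.map φ).mulVec (x - q₀r)) j = _
      rw [e6, e5]
      simp only [hq₀r, hφ, Pi.add_apply]
      push_cast
      ring
  have hx₀mem : x₀ ∈ closure {x : κ → ℝ | ∀ j, ∃ q : ℚ, x j = (q : ℝ)} := by
    rw [hdense.closure_eq]; trivial
  have himg : Φ '' {x : κ → ℝ | ∀ j, ∃ q : ℚ, x j = (q : ℝ)} ⊆
      {x : κ → ℝ | ∃ q : κ → ℚ, M.mulVec q = c ∧ x = fun j => ((q j : ℝ))} := by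
    rintro _ ⟨x, hx, rfl⟩
    exact hΦmap x hx
  have hfin : Φ x₀ ∈ closure {x : κ → ℝ |
      ∃ q : κ → ℚ, M.mulVec q = c ∧ x = fun j => ((q j : ℝ))} :=
    (closure_mono himg)
      ((image_closure_subset_closure_image hΦc) ⟨x₀, hx₀mem, rfl⟩)
  rwa [hΦfix] at hfin

/-- If `P` is a rational polytope and `f` a rational linear map, then
`f(P ∩ ℚ^m) = f(P) ∩ ℚ^k`. -/
theorem stmt1 {m k l : ℕ}
    (A : Matrix (Fin l) (Fin m) ℝ) (b : Fin l → ℝ)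
    (hA : ∀ i j, ∃ q : ℚ, A i j = (q : ℝ)) (hb : ∀ i, ∃ q : ℚ, b i = (q : ℝ))
    (P : Set (Fin m → ℝ)) (hP : P = {x | ∀ i, ∑ j, A i j * x j ≤ b i})
    (hbdd : Bornology.IsBounded P)
    (f : (Fin m → ℝ) →ₗ[ℝ] (Fin k → ℝ))
    (hf : ∀ j i, ∃ q : ℚ, f (Pi.single j 1) i = (q : ℝ)) :
    f '' (P ∩ {x | ∀ j, ∃ q : ℚ, x j = (q : ℝ)}) =
      (f '' P) ∩ {y | ∀ i, ∃ q : ℚ, y i = (q : ℝ)} := by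
  classical
  set φ : ℚ → ℝ := fun q => (q : ℝ) with hφ
  -- rational representatives
  choose A' hA' using hA
  choose b' hb' using hb
  choose F'' hF'' using hf
  set F' : Matrix (Fin k) (Fin m) ℚ := fun i j => F'' j i with hF'
  -- f is given by the matrix F'
  have hFmat : ∀ x : Fin m → ℝ, f x = (F'.map φ).mulVec x := by
    have : f = (F'.map φ).mulVecLin := by
      apply LinearMap.pi_ext
      intro j r
      have hsingle : (Pi.single j r : Fin m → ℝ) = r • (Pi.single j 1 : Fin m → ℝ) := by
        funext j'
        simp [Pi.single_apply, mul_ite]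
      rw [hsingle, _root_.map_smul, _root_.map_smul]
      congr 1
      funext i
      simp only [Matrix.mulVecLin_apply, Matrix.mulVec, dotProduct,
        Matrix.map_apply]
      rw [hF'' j i]
      simp [Matrix.map_apply, hF', Pi.single_apply, hφ]
    intro x
    rw [this]
    rfl
  apply Set.Subset.antisymm
  · -- easy direction
    intro y hy
    obtain ⟨x, ⟨hxP, hxQ⟩, rfl⟩ := hy
    refine ⟨⟨x, hxP, rfl⟩, ?_⟩
    choose r hr using hxQ
    intro i
    refine ⟨F'.mulVec r i, ?_⟩
    rw [hFmat]
    have : x = fun j => ((r j : ℝ)) := funext hr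
    rw [this, ratCast_mulVec]
  · -- hard direction
    rintro y ⟨⟨x₀, hx₀P, hfx₀⟩, hyQ⟩
    choose y' hy' using hyQ
    -- the combined rational system
    set act : Fin l → Prop := fun i => ∑ j, A i j * x₀ j = b i with hact
    set M : Matrix (Fin l ⊕ Fin k) (Fin m) ℚ := fun p j =>
      Sum.rec (fun i => if act i then A' i j else 0) (fun i => F' i j) p with hM
    set c : (Fin l ⊕ Fin k) → ℚ := fun p =>
      Sum.rec (fun i => if act i then b' i else 0) (fun i => y' i) p with hc
    have hsys : (M.map φ).mulVec x₀ = fun p => φ (c p) := by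
      funext p
      cases p with
      | inl i =>
        show (∑ j, φ (if act i then A' i j else 0) * x₀ j) = φ (if act i then b' i else 0)
        by_cases hi : act i
        · simp only [if_pos hi]
          have hterm : ∀ j, φ (A' i j) * x₀ j = A i j * x₀ j := fun j => by simp only [hφ]; rw [← hA' i j]
          rw [Finset.sum_congr rfl (fun j _ => hterm j)]
          have hi' : ∑ j, A i j * x₀ j = b i := hi
          rw [hi', hb' i]
        · simp only [if_neg hi]
          simp [hφ]
      | inr i =>
        have h1 := congrFun hfx₀ i
        rw [hFmat] at h1
        simp only [Matrix.mulVec, dotProduct, Matrix.map_apply, hM, hc] at h1 ⊢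
        show ∑ j, φ (F' i j) * x₀ j = φ (y' i)
        rw [h1, hy' i]
    have hcl := ratSol_dense M c x₀ hsys
    -- the open set of non-active strict inequalities
    set U : Set (Fin m → ℝ) := {x | ∀ i, ¬ act i → ∑ j, A i j * x j < b i} with hU
    have hUopen : IsOpen U := by
      have : U = ⋂ i : Fin l, {x : Fin m → ℝ | ¬ act i → ∑ j, A i j * x j < b i} := by
        ext x; simp [hU]
      rw [this]
      refine isOpen_iInter_of_finite fun i => ?_
      by_cases hi : act i
      · have huniv : {x : Fin m → ℝ | ¬ act i → ∑ j, A i j * x j < b i} = Set.univ := by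
          ext x
          simp only [Set.mem_setOf_eq, Set.mem_univ, iff_true]
          exact fun hni => absurd hi hni
        rw [huniv]; exact isOpen_univ
      · have : {x : Fin m → ℝ | ¬ act i → ∑ j, A i j * x j < b i} =
            {x : Fin m → ℝ | ∑ j, A i j * x j < b i} := by
          ext x; simp [hi]
        rw [this]
        exact isOpen_lt (by continuity) continuous_const
    have hx₀U : x₀ ∈ U := by
      intro i hi
      have hle : ∑ j, A i j * x₀ j ≤ b i := by
        rw [hP] at hx₀P; exact hx₀P i
      exact lt_of_le_of_ne hle hi
    obtain ⟨xh, hxhU, q, hq, rfl⟩ := (mem_closure_iff.mp hcl) U hUopen hx₀U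
    refine ⟨fun j => ((q j : ℝ)), ⟨?_, fun j => ⟨q j, rfl⟩⟩, ?_⟩
    · rw [hP]
      intro i
      by_cases hi : act i
      · have h2 : ∑ j, (if act i then A' i j else 0) * q j
            = (if act i then b' i else 0) := congrFun hq (Sum.inl i)
        simp only [if_pos hi] at h2
        have h3 : ∑ j, A i j * ((q j : ℝ)) = b i := by
          rw [hb' i]
          have : ∀ j, A i j * ((q j : ℝ)) = ((A' i j * q j : ℚ) : ℝ) := fun j => by
            rw [hA' i j]; push_cast; ring
          rw [Finset.sum_congr rfl (fun j _ => this j)]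
          exact_mod_cast h2
        exact le_of_eq h3
      · exact le_of_lt (hxhU i hi)
    · funext i
      have h2 := congrFun hq (Sum.inr i)
      simp only [hM, hc, Matrix.mulVec, dotProduct] at h2
      rw [hFmat]
      rw [congrFun (ratCast_mulVec F' q) i]
      show φ (F'.mulVec q i) = y i
      have h2' : F'.mulVec q i = y' i := h2
      rw [h2', hy' i]
end

section
/- Let P ⊆ ℝ^m be a down-monotone polytope, i.e. P is the convex hull of a finite set of points, P ⊆ ℝ_{≥0}^m, and whenever x ∈ P and 0 ≤ y ≤ x componentwise, also y ∈ P. Then P equals the closure (in the Euclidean topology of ℝ^m) of P ∩ ℚ^m. -/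
/-- A down-monotone polytope equals the closure of its set of rational points. -/
theorem stmt3 {m : ℕ} (P : Set (Fin m → ℝ))
    (hpoly : ∃ S : Finset (Fin m → ℝ), P = convexHull ℝ ↑S)
    (hnonneg : ∀ x ∈ P, ∀ j, 0 ≤ x j)
    (hdown : ∀ x ∈ P, ∀ y : Fin m → ℝ, (∀ j, 0 ≤ y j) → (∀ j, y j ≤ x j) → y ∈ P) :
    P = closure (P ∩ {x | ∀ j, ∃ q : ℚ, x j = (q : ℝ)}) := by
  apply le_antisymm
  · intro x hx
    rw [Metric.mem_closure_iff]
    intro ε hε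
    have key : ∀ j : Fin m, ∃ q : ℚ, 0 ≤ (q : ℝ) ∧ (q : ℝ) ≤ x j ∧ x j - (q : ℝ) < ε := by
      intro j
      have hx0 : 0 ≤ x j := hnonneg x hx j
      rcases eq_or_lt_of_le hx0 with h0 | h0
      · exact ⟨0, by simp [← h0, hε]⟩
      · obtain ⟨q, hq1, hq2⟩ := exists_rat_btwn (show max 0 (x j - ε) < x j by
          rw [max_lt_iff]; exact ⟨h0, by linarith⟩)
        rw [max_lt_iff] at hq1
        exact ⟨q, le_of_lt hq1.1, le_of_lt hq2, by linarith [hq1.2]⟩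
    choose q hq0 hqle hqlt using key
    refine ⟨fun j => (q j : ℝ), ⟨hdown x hx _ hq0 hqle, fun j => ⟨q j, rfl⟩⟩, ?_⟩
    rcases Nat.eq_zero_or_pos m with hm | hm
    · subst hm
      simp [dist_pi_def, hε]
    · rw [dist_pi_lt_iff hε]
      intro j
      rw [Real.dist_eq, abs_of_nonneg (by linarith [hqle j])]
      exact hqlt j
  · obtain ⟨S, rfl⟩ := hpoly
    have hc : IsClosed (convexHull ℝ (S : Set (Fin m → ℝ))) :=
      (S.finite_toSet.isCompact_convexHull ℝ).isClosed
    calc closure _ ⊆ closure (convexHull ℝ (S : Set (Fin m → ℝ))) :=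
          closure_mono Set.inter_subset_left
      _ = _ := hc.closure_eq
end

section
/- Let R be a G-system. Then λ²(R) ≤ ((k−1)/k)·λ*(R)·λ(R) + λ(R)²/k, where λ²(R) = max{ λ_1² + ... + λ_k² : λ ∈ Λ(R) } is the second max-sum capacity, λ(R) = max{ λ_1 + ... + λ_k : λ ∈ Λ(R) } is the max-sum capacity, and λ*(R) = max_{1≤i≤k} max{ x : x e_i ∈ Λ(R) }. -/
open Matrix

/-- The ν-th column of a matrix. -/
def matCol {F : Type} [Field F] {k n : ℕ} (G : Matrix (Fin k) (Fin n) F) (ν : Fin n) :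
    Fin k → F :=
  fun r => G r ν

/-- `R ⊆ {1,...,n}` is a recovery set for object `i` if `e_i` lies in the span of the
columns of `G` indexed by `R`. -/
def IsRecoverySet {F : Type} [Field F] {k n : ℕ} (G : Matrix (Fin k) (Fin n) F)
    (i : Fin k) (R : Finset (Fin n)) : Prop :=
  Pi.single i (1 : F) ∈ Submodule.span F (matCol G '' (R : Set (Fin n)))

/-- The service rate region of a system `𝓡 = (𝓡_1, ..., 𝓡_k)` with server capacity `μ`. -/
def SRR {k n : ℕ} (𝓡 : Fin k → Finset (Finset (Fin n))) (μ : ℝ) : Set (Fin k → ℝ) :=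
  {lam | ∃ x : Fin k → Finset (Fin n) → ℝ,
    (∀ i, ∀ R ∈ 𝓡 i, 0 ≤ x i R) ∧
    (∀ i, ∑ R ∈ 𝓡 i, x i R = lam i) ∧
    (∀ ν : Fin n, ∑ i, ∑ R ∈ 𝓡 i, (if ν ∈ R then x i R else 0) ≤ μ)}

theorem stmt6 {F : Type} [Field F] [Fintype F] {k n : ℕ} (hk : 2 ≤ k) (hkn : k < n)
    (G : Matrix (Fin k) (Fin n) F) (hrank : G.rank = k)
    (hcol : ∀ ν, matCol G ν ≠ 0)
    (𝓡 : Fin k → Finset (Finset (Fin n)))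
    (hne : ∀ i, (𝓡 i).Nonempty)
    (hrec : ∀ i, ∀ R ∈ 𝓡 i, IsRecoverySet G i R)
    -- `lam2 = λ²(𝓡)`, the second max-sum capacity
    (lam2 : ℝ) (hlam2 : IsGreatest {y : ℝ | ∃ lam ∈ SRR 𝓡 1, y = ∑ i, (lam i) ^ 2} lam2)
    -- `lmax = λ(𝓡)`, the max-sum capacity
    (lmax : ℝ) (hlmax : IsGreatest {y : ℝ | ∃ lam ∈ SRR 𝓡 1, y = ∑ i, lam i} lmax)
    -- `lstar = λ*(𝓡) = max_i max {x | x e_i ∈ Λ(𝓡)}`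
    (lstar : ℝ)
    (hlstar : IsGreatest {x : ℝ | ∃ i : Fin k, Pi.single i x ∈ SRR 𝓡 1} lstar) :
    lam2 ≤ ((k : ℝ) - 1) / (k : ℝ) * lstar * lmax + lmax ^ 2 / (k : ℝ) := by

  obtain ⟨lam, hmem, rfl⟩ := hlam2.1
  obtain ⟨x, hx0, hxsum, hxcap⟩ := hmem
  have hnonneg : ∀ i, 0 ≤ lam i := by
    intro i
    rw [← hxsum i]
    exact Finset.sum_nonneg (hx0 i)
  -- each coordinate is at most lstar
  have hle : ∀ i, lam i ≤ lstar := by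
    intro i
    apply hlstar.2
    refine ⟨i, fun j R => if j = i then x j R else 0, ?_, ?_, ?_⟩
    · intro j R hR
      by_cases h : j = i
      · subst h; simpa using hx0 j R hR
      · simp [h]
    · intro j
      by_cases h : j = i
      · subst h; simpa using hxsum j
      · simp [h, Pi.single_eq_of_ne h]
    · intro ν
      refine le_trans ?_ (hxcap ν)
      apply Finset.sum_le_sum
      intro j _
      apply Finset.sum_le_sum
      intro R hR
      by_cases h : j = i <;> by_cases h2 : ν ∈ R <;>
        simp [h, h2, hx0 j R hR]
  set L := ∑ i, lam i with hLdef
  have hL0 : 0 ≤ L := Finset.sum_nonneg fun i _ => hnonneg i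
  have hLmax : L ≤ lmax := hlmax.2 ⟨lam, ⟨x, hx0, hxsum, hxcap⟩, rfl⟩
  have hstar0 : 0 ≤ lstar := le_trans (hnonneg ⟨0, by omega⟩) (hle ⟨0, by omega⟩)
  have hk2 : (2 : ℝ) ≤ (k : ℝ) := by exact_mod_cast hk
  have hkpos : (0 : ℝ) < (k : ℝ) := by linarith
  have hiL : ∀ i, lam i ≤ L := by
    intro i
    exact Finset.single_le_sum (fun j _ => hnonneg j) (Finset.mem_univ i)
  have key : ∑ i, (lam i) ^ 2 ≤ ((k : ℝ) - 1) / (k : ℝ) * lstar * L + L ^ 2 / (k : ℝ) := by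
    by_cases hLs : L ≤ lstar
    · have h1 : ∑ i, (lam i) ^ 2 ≤ L ^ 2 := by
        calc ∑ i, (lam i) ^ 2 ≤ ∑ i, lam i * L := by
              apply Finset.sum_le_sum
              intro i _
              have := hiL i
              nlinarith [hnonneg i]
          _ = L ^ 2 := by rw [← Finset.sum_mul]; ring
      have h2 : L ^ 2 ≤ ((k : ℝ) - 1) / (k : ℝ) * lstar * L + L ^ 2 / (k : ℝ) := by
        rw [div_mul_eq_mul_div, div_mul_eq_mul_div, ← add_div, le_div_iff₀ hkpos]
        nlinarith [mul_nonneg (mul_nonneg (by linarith : (0:ℝ) ≤ (k:ℝ) - 1)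
          (by linarith : 0 ≤ lstar - L)) hL0]
      linarith
    · push_neg at hLs
      have h1 : ∑ i, (lam i) ^ 2 ≤ lstar * L := by
        calc ∑ i, (lam i) ^ 2 ≤ ∑ i, lstar * lam i := by
              apply Finset.sum_le_sum
              intro i _
              have := hle i
              nlinarith [hnonneg i]
          _ = lstar * L := by rw [← Finset.mul_sum]
      have h2 : lstar * L ≤ ((k : ℝ) - 1) / (k : ℝ) * lstar * L + L ^ 2 / (k : ℝ) := by
        rw [div_mul_eq_mul_div, div_mul_eq_mul_div, ← add_div, le_div_iff₀ hkpos]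
        nlinarith [mul_nonneg (by linarith : (0:ℝ) ≤ L - lstar) hL0,
          mul_nonneg hstar0 hL0]
      linarith
  have mono : ((k : ℝ) - 1) / (k : ℝ) * lstar * L + L ^ 2 / (k : ℝ)
      ≤ ((k : ℝ) - 1) / (k : ℝ) * lstar * lmax + lmax ^ 2 / (k : ℝ) := by
    have h1 : ((k : ℝ) - 1) / (k : ℝ) * lstar * L ≤ ((k : ℝ) - 1) / (k : ℝ) * lstar * lmax := by
      apply mul_le_mul_of_nonneg_left hLmax
      exact mul_nonneg (div_nonneg (by linarith) (le_of_lt hkpos)) hstar0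
    have h2 : L ^ 2 / (k : ℝ) ≤ lmax ^ 2 / (k : ℝ) := by
      gcongr
    linarith
  linarith
end

section
/- Let λ = (λ_1,...,λ_k) ∈ Λ(G), let I ⊆ {1,...,k}, and let φ: F_q^k → F_q be a nonzero linear functional such that φ(e_i) ≠ 0 for every i ∈ I (i.e. the hyperplane H = ker φ contains none of the standard basis vectors e_i with i ∈ I). Then ∑_{i∈I} λ_i ≤ |{ν ∈ {1,...,n} : φ(G^ν) ≠ 0}|, the number of columns of G not lying in H. -/
open Matrix

/-- The service rate region `Λ(G)` of the system given by all recovery sets of `G`,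
with server capacity `1`: the allocation `x i R` is required to vanish on non-recovery
sets, so all sums effectively range over the recovery sets of each object. -/
def SRRG {F : Type} [Field F] {k n : ℕ} (G : Matrix (Fin k) (Fin n) F) :
    Set (Fin k → ℝ) :=
  {lam | ∃ x : Fin k → Finset (Fin n) → ℝ,
    (∀ i R, 0 ≤ x i R) ∧
    (∀ i R, ¬ IsRecoverySet G i R → x i R = 0) ∧
    (∀ i, ∑ R : Finset (Fin n), x i R = lam i) ∧
    (∀ ν : Fin n, ∑ i, ∑ R : Finset (Fin n), (if ν ∈ R then x i R else 0) ≤ 1)}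

theorem stmt8 {F : Type} [Field F] [Fintype F] {k n : ℕ} (hk : 2 ≤ k) (hkn : k < n)
    (G : Matrix (Fin k) (Fin n) F) (hrank : G.rank = k)
    (hcol : ∀ ν, matCol G ν ≠ 0)
    (lam : Fin k → ℝ) (hlam : lam ∈ SRRG G)
    (I : Finset (Fin k))
    -- `φ` is a nonzero linear functional whose kernel (a hyperplane) contains no `e_i`, `i ∈ I`
    (φ : (Fin k → F) →ₗ[F] F) (hφ : φ ≠ 0)
    (hI : ∀ i ∈ I, φ (Pi.single i 1) ≠ 0) :
    ∑ i ∈ I, lam i ≤ (Nat.card {ν : Fin n // φ (matCol G ν) ≠ 0} : ℝ) := by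
  classical
  obtain ⟨x, hx0, hxvan, hxsum, hcap⟩ := hlam
  set S : Finset (Fin n) := Finset.univ.filter (fun ν => φ (matCol G ν) ≠ 0) with hS
  have hcard : (Nat.card {ν : Fin n // φ (matCol G ν) ≠ 0} : ℝ) = (S.card : ℝ) := by
    rw [Nat.card_eq_fintype_card]
    norm_cast
    simp [hS, Fintype.card_subtype]
  rw [hcard]
  have key : ∀ i ∈ I, ∀ R : Finset (Fin n),
      x i R ≤ ∑ ν ∈ S, (if ν ∈ R then x i R else 0) := by
    intro i hi R
    by_cases hz : x i R = 0
    · rw [hz]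
      exact Finset.sum_nonneg (fun ν _ => by positivity)
    · have hrec : IsRecoverySet G i R := by
        by_contra h; exact hz (hxvan i R h)
      have hex : ∃ ν ∈ R, φ (matCol G ν) ≠ 0 := by
        by_contra h
        push_neg at h
        have hsub : matCol G '' (R : Set (Fin n)) ⊆ (LinearMap.ker φ : Set _) := by
          rintro _ ⟨ν, hν, rfl⟩
          exact h ν hν
        have := Submodule.span_le.mpr hsub hrec
        exact hI i hi this
      obtain ⟨ν0, hν0R, hν0⟩ := hex
      have hν0S : ν0 ∈ S := by simp [hS, hν0]
      have hle := Finset.single_le_sum (f := fun ν => if ν ∈ R then x i R else 0)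
        (fun ν _ => by by_cases h : ν ∈ R <;> simp [h, hx0 i R]) hν0S
      simp only [if_pos hν0R] at hle
      exact hle
  calc ∑ i ∈ I, lam i = ∑ i ∈ I, ∑ R : Finset (Fin n), x i R := by
        simp_rw [hxsum]
    _ ≤ ∑ i ∈ I, ∑ R : Finset (Fin n), ∑ ν ∈ S, (if ν ∈ R then x i R else 0) :=
        Finset.sum_le_sum (fun i hi => Finset.sum_le_sum (fun R _ => key i hi R))
    _ = ∑ ν ∈ S, ∑ i ∈ I, ∑ R : Finset (Fin n), (if ν ∈ R then x i R else 0) := by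
        have h1 : ∀ i : Fin k, (∑ R : Finset (Fin n), ∑ ν ∈ S, (if ν ∈ R then x i R else 0))
            = ∑ ν ∈ S, ∑ R : Finset (Fin n), (if ν ∈ R then x i R else 0) :=
          fun i => Finset.sum_comm
        rw [Finset.sum_congr rfl (fun i _ => h1 i), Finset.sum_comm]
    _ ≤ ∑ ν ∈ S, ∑ i, ∑ R : Finset (Fin n), (if ν ∈ R then x i R else 0) := by
        refine Finset.sum_le_sum (fun ν _ => ?_)
        refine Finset.sum_le_sum_of_subset_of_nonneg (Finset.subset_univ I) ?_
        intro i _ _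
        exact Finset.sum_nonneg (fun R _ => by by_cases h : ν ∈ R <;> simp [h, hx0])
    _ ≤ ∑ ν ∈ S, (1 : ℝ) := Finset.sum_le_sum (fun ν _ => hcap ν)
    _ = (S.card : ℝ) := by simp
end

section
/- Let d be the minimum Hamming distance of the linear code generated by the rows of G. Then ⌈δ(G)⌉ ≤ d, where δ(G) = min_{1≤i≤k} max{ x ∈ ℝ : x e_i ∈ Λ(G) } is the size of the largest simplex contained in the service rate region Λ(G). -/
open Matrix

theorem stmt9 {F : Type} [Field F] [Fintype F] [DecidableEq F] {k n : ℕ}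
    (hk : 2 ≤ k) (hkn : k < n)
    (G : Matrix (Fin k) (Fin n) F) (hrank : G.rank = k)
    (hcol : ∀ ν, matCol G ν ≠ 0)
    -- `lamstar i = λ_i*(G)`, the largest `x` with `x e_i ∈ Λ(G)`; `δ(G) = min_i lamstar i`
    (lamstar : Fin k → ℝ)
    (hstar : ∀ i, IsGreatest {x : ℝ | Pi.single i x ∈ SRRG G} (lamstar i))
    -- `d` is the minimum Hamming distance of the code generated by the rows of `G`
    (d : ℕ)
    (hd : IsLeast {w : ℕ | ∃ u : Fin k → F, u ᵥ* G ≠ 0 ∧ w = hammingNorm (u ᵥ* G)} d) :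
    ⌈Finset.univ.inf' (Finset.univ_nonempty_iff.mpr ⟨⟨0, by omega⟩⟩) lamstar⌉ ≤ (d : ℤ) := by
  obtain ⟨⟨u, hu0, hud⟩, -⟩ := hd
  -- u is nonzero at some coordinate i
  have hune : u ≠ 0 := by
    rintro rfl; exact hu0 (by simp)
  obtain ⟨i, hui'⟩ := Function.ne_iff.mp hune
  have hui : u i ≠ 0 := by simpa using hui'
  -- support of the codeword
  set S : Finset (Fin n) := Finset.univ.filter (fun ν => (u ᵥ* G) ν ≠ 0) with hS
  have hScard : S.card = d := by
    rw [hud]; rfl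
  -- the dot product linear functional
  let f : (Fin k → F) →ₗ[F] F :=
    { toFun := fun v => u ⬝ᵥ v
      map_add' := fun a b => dotProduct_add u a b
      map_smul' := fun c a => by simp [dotProduct_smul] }
  -- every recovery set of i meets S
  have hmeet : ∀ R : Finset (Fin n), IsRecoverySet G i R → ∃ ν ∈ S, ν ∈ R := by
    intro R hR
    by_contra h
    push_neg at h
    have hsub : matCol G '' (R : Set (Fin n)) ⊆ (LinearMap.ker f : Set (Fin k → F)) := by
      rintro _ ⟨ν, hν, rfl⟩
      have hν' : ν ∈ R := hν
      have : (u ᵥ* G) ν = 0 := by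
        by_contra hne
        exact h ν (Finset.mem_filter.mpr ⟨Finset.mem_univ ν, hne⟩) hν'
      exact this
    have hker : Pi.single i (1 : F) ∈ LinearMap.ker f := by
      have := Submodule.span_le.mpr hsub
      exact this hR
    have : u i = 0 := by
      have h1 : f (Pi.single i (1 : F)) = 0 := hker
      simpa [f, dotProduct_single] using h1
    exact hui this
  -- get the allocation for lamstar i
  obtain ⟨x, hx0, hxrec, hxsum, hxcap⟩ := (hstar i).1
  have hlam : lamstar i = ∑ R : Finset (Fin n), x i R := by
    rw [hxsum i, Pi.single_eq_same]
  have hnn : ∀ (j : Fin k) (R : Finset (Fin n)) (ν : Fin n),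
      0 ≤ (if ν ∈ R then x j R else 0) := fun j R ν => by
    split_ifs
    · exact hx0 j R
    · exact le_rfl
  have key : lamstar i ≤ (d : ℝ) := by
    rw [hlam]
    have step1 : ∑ R : Finset (Fin n), x i R ≤
        ∑ R : Finset (Fin n), ∑ ν ∈ S, (if ν ∈ R then x i R else 0) := by
      apply Finset.sum_le_sum
      intro R _
      by_cases hxR : x i R = 0
      · rw [hxR]
        exact Finset.sum_nonneg fun ν _ => by split_ifs <;> exact le_rfl
      · have hrec : IsRecoverySet G i R := by
          by_contra hn
          exact hxR (hxrec i R hn)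
        obtain ⟨ν, hνS, hνR⟩ := hmeet R hrec
        calc x i R = (if ν ∈ R then x i R else 0) := by rw [if_pos hνR]
          _ ≤ ∑ ν ∈ S, (if ν ∈ R then x i R else 0) :=
            Finset.single_le_sum (f := fun μ => if μ ∈ R then x i R else 0)
              (fun μ _ => hnn i R μ) hνS
    have step2 : ∑ R : Finset (Fin n), ∑ ν ∈ S, (if ν ∈ R then x i R else 0) =
        ∑ ν ∈ S, ∑ R : Finset (Fin n), (if ν ∈ R then x i R else 0) :=
      Finset.sum_comm
    have step3 : ∀ ν ∈ S, ∑ R : Finset (Fin n), (if ν ∈ R then x i R else 0) ≤ 1 := by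
      intro ν _
      calc ∑ R : Finset (Fin n), (if ν ∈ R then x i R else 0)
          ≤ ∑ j, ∑ R : Finset (Fin n), (if ν ∈ R then x j R else 0) :=
            Finset.single_le_sum
              (f := fun j => ∑ R : Finset (Fin n), if ν ∈ R then x j R else 0)
              (fun j _ => Finset.sum_nonneg fun R _ => hnn j R ν) (Finset.mem_univ i)
        _ ≤ 1 := hxcap ν
    calc ∑ R : Finset (Fin n), x i R
        ≤ ∑ ν ∈ S, ∑ R : Finset (Fin n), (if ν ∈ R then x i R else 0) := by
          rw [← step2]; exact step1
      _ ≤ ∑ _ν ∈ S, (1 : ℝ) := Finset.sum_le_sum step3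
      _ = S.card := by simp
      _ = d := by rw [hScard]
  rw [Int.ceil_le]
  push_cast
  exact le_trans (Finset.inf'_le lamstar (Finset.mem_univ i)) key
end

section
/- Suppose G is systematic (its first k columns form the k×k identity matrix) and G has availability t, i.e. for every i ∈ {1,...,k} there exist t+1 pairwise disjoint recovery sets for object i. Then (t+1)·e_i ∈ Λ(G) for every i ∈ {1,...,k}; consequently t+1 ≤ δ(G), and the minimum Hamming distance d of the code generated by the rows of G satisfies d ≥ t+1. -/
open Matrix

theorem stmt10 {F : Type} [Field F] [Fintype F] [DecidableEq F] {k n : ℕ}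
    (hk : 2 ≤ k) (hkn : k < n)
    (G : Matrix (Fin k) (Fin n) F) (hrank : G.rank = k)
    (hcol : ∀ ν, matCol G ν ≠ 0)
    -- `G` is systematic: its first `k` columns form the identity matrix
    (hsys : ∀ j : Fin k, matCol G (Fin.castLE hkn.le j) = Pi.single j 1)
    -- `G` has availability `t`: each object has `t+1` pairwise disjoint recovery sets
    (t : ℕ)
    (havail : ∀ i : Fin k, ∃ Rs : Fin (t + 1) → Finset (Fin n),
      (∀ a, IsRecoverySet G i (Rs a)) ∧ ∀ a b, a ≠ b → Disjoint (Rs a) (Rs b))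
    -- `lamstar i = λ_i*(G)`; `δ(G) = min_i lamstar i`
    (lamstar : Fin k → ℝ)
    (hstar : ∀ i, IsGreatest {x : ℝ | Pi.single i x ∈ SRRG G} (lamstar i))
    -- `d` is the minimum Hamming distance of the code generated by the rows of `G`
    (d : ℕ)
    (hd : IsLeast {w : ℕ | ∃ u : Fin k → F, u ᵥ* G ≠ 0 ∧ w = hammingNorm (u ᵥ* G)} d) :
    (∀ i, Pi.single i ((t : ℝ) + 1) ∈ SRRG G) ∧
    (∀ i, (t : ℝ) + 1 ≤ lamstar i) ∧
    t + 1 ≤ d := by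
  -- Part 1: (t+1) e_i ∈ Λ(G)
  have key : ∀ i, Pi.single i ((t : ℝ) + 1) ∈ SRRG G := by
    intro i
    obtain ⟨Rs, hRec, hDisj⟩ := havail i
    refine ⟨fun i' R => if i' = i then ∑ a : Fin (t+1), (if Rs a = R then (1:ℝ) else 0)
        else 0, ?_, ?_, ?_, ?_⟩
    · intro i' R
      dsimp only
      split
      · positivity
      · exact le_refl 0
    · intro i' R hR
      dsimp only
      split
      · next h =>
          subst h
          refine Finset.sum_eq_zero fun a _ => ?_
          rw [if_neg]
          intro hEq
          exact hR (hEq ▸ hRec a)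
      · rfl
    · intro i'
      by_cases h : i' = i
      · subst h
        simp only [if_pos rfl, ite_true, Pi.single_eq_same]
        rw [Finset.sum_comm]
        have : ∀ a : Fin (t+1),
            (∑ R : Finset (Fin n), if Rs a = R then (1:ℝ) else 0) = 1 := by
          intro a
          rw [Finset.sum_ite_eq]
          simp
        rw [Finset.sum_congr rfl fun a _ => this a]
        simp
      · simp [h, Pi.single_eq_of_ne h]
    · intro ν
      have hrow : ∀ i', i' ≠ i →
          (∑ R : Finset (Fin n), (if ν ∈ R then
            (if i' = i then ∑ a : Fin (t+1), (if Rs a = R then (1:ℝ) else 0) else 0)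
            else 0)) = 0 := by
        intro i' hi'
        refine Finset.sum_eq_zero fun R _ => ?_
        simp [hi']
      rw [Finset.sum_eq_single_of_mem i (Finset.mem_univ i)
        (fun i' _ hi' => hrow i' hi')]
      simp only [if_pos rfl, ite_true]
      have step1 : (∑ R : Finset (Fin n), (if ν ∈ R then
            (∑ a : Fin (t+1), (if Rs a = R then (1:ℝ) else 0)) else 0))
          = ∑ a : Fin (t+1), (if ν ∈ Rs a then (1:ℝ) else 0) := by
        have : ∀ R : Finset (Fin n), (if ν ∈ R then
            (∑ a : Fin (t+1), (if Rs a = R then (1:ℝ) else 0)) else 0)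
            = ∑ a : Fin (t+1), (if Rs a = R then (if ν ∈ Rs a then (1:ℝ) else 0) else 0) := by
          intro R
          split
          · next hν =>
              refine Finset.sum_congr rfl fun a _ => ?_
              by_cases hEq : Rs a = R
              · subst hEq; simp [hν]
              · simp [hEq]
          · next hν =>
              symm
              refine Finset.sum_eq_zero fun a _ => ?_
              by_cases hEq : Rs a = R
              · subst hEq; simp [hν]
              · simp [hEq]
        rw [Finset.sum_congr rfl fun R _ => this R, Finset.sum_comm]
        refine Finset.sum_congr rfl fun a _ => ?_
        rw [Finset.sum_ite_eq]
        simp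
      rw [step1, Finset.sum_boole]
      have hcard : ({a : Fin (t+1) | ν ∈ Rs a} : Finset (Fin (t+1))).card ≤ 1 := by
        refine Finset.card_le_one.2 fun a ha b hb => ?_
        by_contra hab
        exact (Finset.disjoint_left.1 (hDisj a b hab))
          (Finset.mem_filter.1 ha).2 (Finset.mem_filter.1 hb).2
      exact_mod_cast hcard
  refine ⟨key, fun i => (hstar i).2 (key i), ?_⟩
  -- Part 3: minimum distance
  obtain ⟨u, hu, hdw⟩ := hd.1
  set c : Fin n → F := u ᵥ* G with hc
  have hune : u ≠ 0 := by
    intro h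
    exact hu (by rw [hc, h, Matrix.zero_vecMul])
  obtain ⟨i, hi⟩ := Function.ne_iff.1 hune
  obtain ⟨Rs, hRec, hDisj⟩ := havail i
  -- linear functional v ↦ u ⬝ᵥ v
  let φ : (Fin k → F) →ₗ[F] F :=
    { toFun := fun v => u ⬝ᵥ v
      map_add' := fun x y => dotProduct_add u x y
      map_smul' := fun r x => by simp [dotProduct_smul] }
  have hφcol : ∀ ν, φ (matCol G ν) = c ν := fun ν => rfl
  have hexists : ∀ a : Fin (t+1), ∃ ν ∈ Rs a, c ν ≠ 0 := by
    intro a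
    by_contra hno
    push_neg at hno
    have hker : Submodule.span F (matCol G '' ((Rs a : Set (Fin n)))) ≤ LinearMap.ker φ := by
      rw [Submodule.span_le]
      rintro v ⟨ν, hν, rfl⟩
      simp only [SetLike.mem_coe, LinearMap.mem_ker]
      rw [hφcol]
      exact hno ν hν
    have h0 : φ (Pi.single i (1 : F)) = 0 := hker (hRec a)
    have : u i = 0 := by
      have := h0
      simp only [φ, LinearMap.coe_mk, AddHom.coe_mk, dotProduct_single, mul_one] at this
      exact this
    exact hi this
  choose f hfmem hfne using hexists
  have hinj : Set.InjOn f (Finset.univ : Finset (Fin (t+1))) := by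
    intro a _ b _ hab
    by_contra hne
    exact (Finset.disjoint_left.1 (hDisj a b hne)) (hfmem a) (hab ▸ hfmem b)
  have hcard : (Finset.univ : Finset (Fin (t+1))).card ≤
      ({ν : Fin n | c ν ≠ 0} : Finset (Fin n)).card :=
    Finset.card_le_card_of_injOn f
      (fun a _ => Finset.mem_filter.2 ⟨Finset.mem_univ _, hfne a⟩) hinj
  simp only [Finset.card_univ, Fintype.card_fin] at hcard
  rw [hdw]
  exact le_trans hcard (le_of_eq rfl)
end

section
/- (Dual Distance Bound) Suppose G is systematic and let d⊥ be the minimum Hamming distance of the dual of the code generated by the rows of G. Then every (λ_1,...,λ_k) ∈ Λ(G) satisfies ∑_{i=1}^k ( min{λ_i, 1} + (d⊥ − 1)·max{0, λ_i − 1} ) ≤ n. -/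
open Matrix

-- key lemma: recovery set avoiding the systematic column gives a dual word
lemma key {F : Type} [Field F] [DecidableEq F] {k n : ℕ} (hkn : k < n)
    (G : Matrix (Fin k) (Fin n) F)
    (hsys : ∀ j : Fin k, matCol G (Fin.castLE hkn.le j) = Pi.single j 1)
    (i : Fin k) (R : Finset (Fin n)) (hR : IsRecoverySet G i R)
    (hm : Fin.castLE hkn.le i ∉ R) :
    ∃ y : Fin n → F, y ≠ 0 ∧ (∀ u : Fin k → F, ∑ ν, y ν * (u ᵥ* G) ν = 0) ∧
      hammingNorm y ≤ R.card + 1 := by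
  classical
  obtain ⟨l, hl, hlc⟩ := (Finsupp.mem_span_image_iff_linearCombination F).1 hR
  rw [Finsupp.mem_supported] at hl
  set c : Fin n := Fin.castLE hkn.le i with hc
  have hlc0 : ∀ ν, ν ∉ R → l ν = 0 := by
    intro ν hν
    by_contra h
    exact hν (hl (Finsupp.mem_support_iff.2 h))
  set y : Fin n → F := fun ν => l ν - (Pi.single c 1 : Fin n → F) ν with hy
  have hrow : ∀ r, ∑ ν, l ν * G r ν = (Pi.single i 1 : Fin k → F) r := by
    intro r
    rw [Finsupp.linearCombination_apply, Finsupp.sum_fintype] at hlc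
    · have := congrFun hlc r
      simpa [matCol, Finset.sum_apply, mul_comm] using this
    · intro ν; simp
  refine ⟨y, ?_, ?_, ?_⟩
  · intro h
    have := congrFun h c
    have hlc' : l c = 0 := hlc0 c hm
    simp [hy, hlc'] at this
  · intro u
    have step : ∀ r, ∑ ν, y ν * G r ν = 0 := by
      intro r
      have h1 : ∑ ν, (Pi.single c 1 : Fin n → F) ν * G r ν = G r c := by
        simp [Pi.single_apply, ite_mul]
      have h2 : G r c = (Pi.single i 1 : Fin k → F) r := congrFun (hsys i) r
      have : ∑ ν, y ν * G r ν = ∑ ν, l ν * G r ν - ∑ ν, (Pi.single c 1 : Fin n → F) ν * G r ν := by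
        rw [← Finset.sum_sub_distrib]
        apply Finset.sum_congr rfl
        intro ν _
        simp [hy, sub_mul]
      rw [this, hrow r, h1, h2, sub_self]
    calc ∑ ν, y ν * (u ᵥ* G) ν = ∑ ν, ∑ r, y ν * (u r * G r ν) := by
          apply Finset.sum_congr rfl
          intro ν _
          rw [Matrix.vecMul, dotProduct, Finset.mul_sum]
      _ = ∑ r, ∑ ν, y ν * (u r * G r ν) := Finset.sum_comm
      _ = ∑ r, u r * ∑ ν, y ν * G r ν := by
          apply Finset.sum_congr rfl
          intro r _
          rw [Finset.mul_sum]
          apply Finset.sum_congr rfl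
          intro ν _
          ring
      _ = 0 := by simp [step]
  · have hsub : ({ν | y ν ≠ 0} : Finset (Fin n)) ⊆ insert c R := by
      intro ν hν
      simp only [Finset.mem_filter, Finset.mem_univ, true_and] at hν
      by_contra h
      simp only [Finset.mem_insert, not_or] at h
      apply hν
      simp [hy, hlc0 ν h.2, Pi.single_apply, h.1]
    calc hammingNorm y ≤ (insert c R).card := Finset.card_le_card hsub
      _ ≤ R.card + 1 := Finset.card_insert_le _ _

-- dual distance at least 2
lemma dual_ge_two {F : Type} [Field F] [DecidableEq F] {k n : ℕ}
    (G : Matrix (Fin k) (Fin n) F) (hcol : ∀ ν, matCol G ν ≠ 0)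
    (z : Fin n → F) (hz0 : z ≠ 0)
    (hzd : ∀ u : Fin k → F, ∑ ν, z ν * (u ᵥ* G) ν = 0) :
    2 ≤ hammingNorm z := by
  by_contra h
  push_neg at h
  interval_cases hn : hammingNorm z
  · exact hz0 (hammingNorm_eq_zero.1 hn)
  · obtain ⟨ν0, hν0⟩ := Finset.card_eq_one.1 hn
    have hzν0 : z ν0 ≠ 0 := by
      have : ν0 ∈ ({ν | z ν ≠ 0} : Finset (Fin n)) := by rw [hν0]; simp
      simpa using this
    have hzother : ∀ ν, ν ≠ ν0 → z ν = 0 := by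
      intro ν hν
      by_contra hzν
      have : ν ∈ ({ν | z ν ≠ 0} : Finset (Fin n)) := by simpa using hzν
      rw [hν0] at this
      exact hν (Finset.mem_singleton.1 this)
    apply hcol ν0
    funext r
    have := hzd (Pi.single r 1)
    have hvm : ∀ ν, ((Pi.single r 1 : Fin k → F) ᵥ* G) ν = G r ν := by
      intro ν
      rw [Matrix.vecMul, dotProduct]
      simp [Pi.single_apply, ite_mul]
    rw [Finset.sum_eq_single ν0] at this
    · rw [hvm ν0] at this
      have := (mul_eq_zero.1 this).resolve_left hzν0
      simpa [matCol] using this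
    · intro ν _ hν; rw [hzother ν hν]; ring
    · intro h; exact absurd (Finset.mem_univ ν0) h

theorem stmt12 {F : Type} [Field F] [Fintype F] [DecidableEq F] {k n : ℕ}
    (hk : 2 ≤ k) (hkn : k < n)
    (G : Matrix (Fin k) (Fin n) F) (hrank : G.rank = k)
    (hcol : ∀ ν, matCol G ν ≠ 0)
    -- `G` is systematic: its first `k` columns form the identity matrix
    (hsys : ∀ j : Fin k, matCol G (Fin.castLE hkn.le j) = Pi.single j 1)
    -- `dperp` is the minimum Hamming distance of the dual of the code generated by `G`
    (dperp : ℕ)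
    (hdperp : IsLeast {w : ℕ | ∃ x : Fin n → F, x ≠ 0 ∧
      (∀ u : Fin k → F, ∑ ν, x ν * (u ᵥ* G) ν = 0) ∧ w = hammingNorm x} dperp) :
    ∀ lam ∈ SRRG G,
      ∑ i, (min (lam i) 1 + ((dperp : ℝ) - 1) * max 0 (lam i - 1)) ≤ (n : ℝ) := by
  classical
  -- d⊥ ≥ 2
  have hd2 : 2 ≤ dperp := by
    obtain ⟨z, hz0, hzd, hzw⟩ := hdperp.1
    rw [hzw]
    exact dual_ge_two G hcol z hz0 hzd
  have hd2r : (2:ℝ) ≤ (dperp:ℝ) := by exact_mod_cast hd2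
  intro lam hlam
  obtain ⟨x, hpos, hzero, hsum, hcap⟩ := hlam
  -- recovery sets are nonempty
  have hne : ∀ i (R : Finset (Fin n)), IsRecoverySet G i R → 1 ≤ R.card := by
    intro i R hR
    rcases Finset.eq_empty_or_nonempty R with h | h
    · exfalso
      rw [IsRecoverySet, h] at hR
      simp only [Finset.coe_empty, Set.image_empty, Submodule.span_empty,
        Submodule.mem_bot] at hR
      have := congrFun hR i
      simp at this
    · exact Finset.Nonempty.card_pos h
  -- recovery sets avoiding the systematic column are large
  have hbig : ∀ i (R : Finset (Fin n)), IsRecoverySet G i R →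
      Fin.castLE hkn.le i ∉ R → (dperp:ℝ) - 1 ≤ (R.card:ℝ) := by
    intro i R hR hm
    obtain ⟨y, hy0, hyd, hyw⟩ := key hkn G hsys i R hR hm
    have : dperp ≤ R.card + 1 := le_trans (hdperp.2 ⟨y, hy0, hyd, rfl⟩) hyw
    have : (dperp:ℝ) ≤ (R.card:ℝ) + 1 := by exact_mod_cast this
    linarith
  set s : Fin k → ℝ := fun i => ∑ R : Finset (Fin n),
    if Fin.castLE hkn.le i ∈ R then x i R else 0 with hs
  -- s i ≤ 1
  have hs1 : ∀ i, s i ≤ 1 := by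
    intro i
    refine le_trans ?_ (hcap (Fin.castLE hkn.le i))
    apply Finset.single_le_sum (f := fun j => ∑ R : Finset (Fin n),
      if Fin.castLE hkn.le i ∈ R then x j R else 0)
    · intro j _
      apply Finset.sum_nonneg
      intro R _
      split_ifs
      · exact hpos j R
      · exact le_refl 0
    · exact Finset.mem_univ i
  have hslam : ∀ i, s i ≤ lam i := by
    intro i
    rw [← hsum i]
    apply Finset.sum_le_sum
    intro R _
    split_ifs
    · exact le_refl _
    · exact hpos i R
  -- per-object bound
  have hB : ∀ i, s i + ((dperp:ℝ) - 1) * (lam i - s i) ≤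
      ∑ R : Finset (Fin n), x i R * (R.card : ℝ) := by
    intro i
    have hexp : s i + ((dperp:ℝ) - 1) * (lam i - s i) =
        ∑ R : Finset (Fin n),
          ((if Fin.castLE hkn.le i ∈ R then x i R else 0) +
            ((dperp:ℝ) - 1) * (x i R - if Fin.castLE hkn.le i ∈ R then x i R else 0)) := by
      rw [Finset.sum_add_distrib, ← Finset.mul_sum, Finset.sum_sub_distrib, hsum i]
    rw [hexp]
    apply Finset.sum_le_sum
    intro R _
    by_cases hx : x i R = 0
    · simp [hx]
    · have hR : IsRecoverySet G i R := by
        by_contra h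
        exact hx (hzero i R h)
      have hc1 : (1:ℝ) ≤ (R.card : ℝ) := by exact_mod_cast hne i R hR
      have hxpos : 0 ≤ x i R := hpos i R
      by_cases hm : Fin.castLE hkn.le i ∈ R
      · simp only [if_pos hm]
        nlinarith
      · simp only [if_neg hm]
        have := hbig i R hR hm
        nlinarith
  -- capacity bound
  have hA : ∑ i, ∑ R : Finset (Fin n), x i R * (R.card : ℝ) ≤ (n:ℝ) := by
    have hrw : ∀ i (R : Finset (Fin n)), x i R * (R.card : ℝ) =
        ∑ ν, (if ν ∈ R then x i R else 0) := by
      intro i R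
      rw [Finset.sum_ite_mem, Finset.univ_inter, Finset.sum_const, nsmul_eq_mul, mul_comm]
    calc ∑ i, ∑ R : Finset (Fin n), x i R * (R.card : ℝ)
        = ∑ i, ∑ R : Finset (Fin n), ∑ ν, (if ν ∈ R then x i R else 0) := by
          apply Finset.sum_congr rfl; intro i _
          apply Finset.sum_congr rfl; intro R _
          exact hrw i R
      _ = ∑ ν, ∑ i, ∑ R : Finset (Fin n), (if ν ∈ R then x i R else 0) := by
          have hin : ∀ i : Fin k,
              ∑ R : Finset (Fin n), ∑ ν, (if ν ∈ R then x i R else 0) =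
              ∑ ν, ∑ R : Finset (Fin n), (if ν ∈ R then x i R else 0) :=
            fun i => Finset.sum_comm
          simp_rw [hin]
          exact Finset.sum_comm
      _ ≤ ∑ _ν : Fin n, (1:ℝ) := Finset.sum_le_sum fun ν _ => hcap ν
      _ = (n:ℝ) := by simp
  -- combine
  calc ∑ i, (min (lam i) 1 + ((dperp : ℝ) - 1) * max 0 (lam i - 1))
      ≤ ∑ i, (s i + ((dperp:ℝ) - 1) * (lam i - s i)) := by
        apply Finset.sum_le_sum
        intro i _
        rcases le_total (lam i) 1 with h | h
        · rw [min_eq_left h, max_eq_left (by linarith)]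
          nlinarith [hslam i, hs1 i]
        · rw [min_eq_right h, max_eq_right (by linarith)]
          nlinarith [hslam i, hs1 i]
    _ ≤ ∑ i, ∑ R : Finset (Fin n), x i R * (R.card : ℝ) :=
        Finset.sum_le_sum fun i _ => hB i
    _ ≤ (n:ℝ) := hA
end

section
/- Suppose G is systematic and for i ∈ {1,...,k} let s_i be the number of systematic nodes for object i, i.e. the number of columns of G equal to a nonzero scalar multiple of e_i. Then every (λ_1,...,λ_k) ∈ Λ(G) satisfies ∑_{i=1}^k ( min{λ_i, s_i} + 2·max{0, λ_i − s_i} ) ≤ n. -/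
open Matrix

theorem stmt13 {F : Type} [Field F] [Fintype F] {k n : ℕ}
    (hk : 2 ≤ k) (hkn : k < n)
    (G : Matrix (Fin k) (Fin n) F) (hrank : G.rank = k)
    (hcol : ∀ ν, matCol G ν ≠ 0)
    -- `G` is systematic: its first `k` columns form the identity matrix
    (hsys : ∀ j : Fin k, matCol G (Fin.castLE hkn.le j) = Pi.single j 1)
    -- `s i` is the number of systematic nodes for object `i`
    (s : Fin k → ℕ)
    (hs : ∀ i, s i = Nat.card {ν : Fin n // ∃ c : F, c ≠ 0 ∧
      matCol G ν = c • (Pi.single i 1 : Fin k → F)}) :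
    ∀ lam ∈ SRRG G,
      ∑ i, (min (lam i) (s i : ℝ) + 2 * max 0 (lam i - (s i : ℝ))) ≤ (n : ℝ) := by
  classical
  intro lam hlam
  obtain ⟨x, hx0, hxrec, hxsum, hxcap⟩ := hlam
  set S : Fin k → Finset (Fin n) := fun i => Finset.univ.filter
    (fun ν => ∃ c : F, c ≠ 0 ∧ matCol G ν = c • (Pi.single i 1 : Fin k → F)) with hS
  have hscard : ∀ i, (s i : ℝ) = ((S i).card : ℝ) := by
    intro i
    rw [hs i, Nat.card_eq_fintype_card, Fintype.card_subtype]
  -- a recovery set disjoint from S i has at least 2 elements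
  have hsize : ∀ i R, x i R ≠ 0 → R ∩ S i = ∅ → 2 ≤ R.card := by
    intro i R hx hdisj
    by_contra h
    push_neg at h
    have hrec : IsRecoverySet G i R := by
      by_contra hc; exact hx (hxrec i R hc)
    interval_cases hcard : R.card
    · rw [Finset.card_eq_zero] at hcard
      subst hcard
      simp only [IsRecoverySet, Finset.coe_empty, Set.image_empty,
        Submodule.span_empty, Submodule.mem_bot] at hrec
      simpa using congrFun hrec i
    · rw [Finset.card_eq_one] at hcard
      obtain ⟨ν, rfl⟩ := hcard
      simp only [IsRecoverySet, Finset.coe_singleton, Set.image_singleton,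
        Submodule.mem_span_singleton] at hrec
      obtain ⟨c, hc⟩ := hrec
      have hc0 : c ≠ 0 := by
        rintro rfl
        rw [zero_smul] at hc
        simpa using congrFun hc i
      have hνS : ν ∈ S i := by
        rw [hS]
        simp only [Finset.mem_filter, Finset.mem_univ, true_and]
        exact ⟨c⁻¹, inv_ne_zero hc0, by rw [← hc, smul_smul, inv_mul_cancel₀ hc0, one_smul]⟩
      have : ν ∈ ({ν} : Finset (Fin n)) ∩ S i := Finset.mem_inter.2 ⟨Finset.mem_singleton_self ν, hνS⟩
      rw [hdisj] at this
      exact absurd this (Finset.notMem_empty ν)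
  set a : Fin k → ℝ := fun i => ∑ R : Finset (Fin n), if (R ∩ S i).Nonempty then x i R else 0
    with ha
  set b : Fin k → ℝ := fun i => ∑ R : Finset (Fin n), if (R ∩ S i).Nonempty then 0 else x i R
    with hb
  have hab : ∀ i, a i + b i = lam i := by
    intro i
    rw [ha, hb, ← hxsum i, ← Finset.sum_add_distrib]
    apply Finset.sum_congr rfl
    intro R _
    by_cases h : (R ∩ S i).Nonempty <;> simp [h]
  have hb0 : ∀ i, 0 ≤ b i := by
    intro i
    apply Finset.sum_nonneg
    intro R _
    by_cases h : (R ∩ S i).Nonempty <;> simp [h, hx0]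
  have hite : ∀ i (R : Finset (Fin n)) (ν : Fin n), 0 ≤ (if ν ∈ R then x i R else 0) := by
    intro i R ν
    by_cases h : ν ∈ R <;> simp [h, hx0]
  -- capacity per node: object i's usage of node ν is at most 1
  have hcapi : ∀ i (ν : Fin n), ∑ R : Finset (Fin n), (if ν ∈ R then x i R else 0) ≤ 1 := by
    intro i ν
    refine le_trans ?_ (hxcap ν)
    apply Finset.single_le_sum (f := fun j => ∑ R : Finset (Fin n), (if ν ∈ R then x j R else 0))
      (fun j _ => Finset.sum_nonneg fun R _ => hite j R ν) (Finset.mem_univ i)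
  -- a i ≤ s i
  have haS : ∀ i, a i ≤ ((S i).card : ℝ) := by
    intro i
    have step1 : a i ≤ ∑ ν ∈ S i, ∑ R : Finset (Fin n), (if ν ∈ R then x i R else 0) := by
      rw [ha, Finset.sum_comm]
      apply Finset.sum_le_sum
      intro R _
      by_cases h : (R ∩ S i).Nonempty
      · obtain ⟨ν₀, hν₀⟩ := h
        rw [Finset.mem_inter] at hν₀
        rw [if_pos (show (R ∩ S i).Nonempty from ⟨ν₀, Finset.mem_inter.2 hν₀⟩)]
        calc x i R = ∑ ν ∈ {ν₀}, (if ν ∈ R then x i R else 0) := by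
              simp [hν₀.1]
          _ ≤ ∑ ν ∈ S i, (if ν ∈ R then x i R else 0) := by
              apply Finset.sum_le_sum_of_subset_of_nonneg
              · simp [hν₀.2]
              · intro ν _ _; exact hite i R ν
      · simp only [if_neg h]
        apply Finset.sum_nonneg
        intro ν _; exact hite i R ν
    calc a i ≤ ∑ ν ∈ S i, ∑ R : Finset (Fin n), (if ν ∈ R then x i R else 0) := step1
      _ ≤ ∑ _ν ∈ S i, (1 : ℝ) := Finset.sum_le_sum fun ν _ => hcapi i ν
      _ = ((S i).card : ℝ) := by simp
  -- total usage bound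
  have htotal : ∑ i, (a i + 2 * b i) ≤ (n : ℝ) := by
    have key : ∀ i, a i + 2 * b i ≤ ∑ R : Finset (Fin n), (R.card : ℝ) * x i R := by
      intro i
      rw [ha, hb, Finset.mul_sum, ← Finset.sum_add_distrib]
      apply Finset.sum_le_sum
      intro R _
      by_cases h : (R ∩ S i).Nonempty
      · simp only [if_pos h, mul_zero, add_zero]
        have hR1 : 1 ≤ (R.card : ℝ) := by
          have : R.Nonempty := ⟨h.choose, (Finset.mem_inter.1 h.choose_spec).1⟩
          have := Finset.card_pos.2 this
          exact_mod_cast this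
        nlinarith [hx0 i R]
      · simp only [if_neg h, zero_add]
        by_cases hx : x i R = 0
        · simp [hx]
        · have h2 : 2 ≤ (R.card : ℝ) := by
            have := hsize i R hx (Finset.not_nonempty_iff_eq_empty.1 h)
            exact_mod_cast this
          nlinarith [hx0 i R]
    calc ∑ i, (a i + 2 * b i) ≤ ∑ i, ∑ R : Finset (Fin n), (R.card : ℝ) * x i R :=
          Finset.sum_le_sum fun i _ => key i
      _ = ∑ ν : Fin n, ∑ i, ∑ R : Finset (Fin n), (if ν ∈ R then x i R else 0) := by
          have swap : ∀ i, ∑ R : Finset (Fin n), (R.card : ℝ) * x i R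
              = ∑ ν : Fin n, ∑ R : Finset (Fin n), (if ν ∈ R then x i R else 0) := by
            intro i
            rw [Finset.sum_comm]
            apply Finset.sum_congr rfl
            intro R _
            rw [Finset.sum_ite_mem, Finset.univ_inter, Finset.sum_const, nsmul_eq_mul]
          simp_rw [swap]
          exact Finset.sum_comm
      _ ≤ ∑ _ν : Fin n, (1 : ℝ) := Finset.sum_le_sum fun ν _ => hxcap ν
      _ = (n : ℝ) := by simp
  refine le_trans (Finset.sum_le_sum ?_) htotal
  intro i _
  have h1 := hab i
  have h2 := haS i
  have h3 := hb0 i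
  rw [hscard i]
  rcases le_total (lam i) (((S i).card : ℝ)) with h | h
  · rw [min_eq_left h, max_eq_left (by linarith)]
    linarith
  · rw [min_eq_right h, max_eq_right (by linarith)]
    linarith
end

section
/- Let d⊥ be the minimum Hamming distance of the dual of the code generated by the rows of G, and for i ∈ {1,...,k} let s_i be the number of columns of G that are nonzero scalar multiples of e_i. Then every (λ_1,...,λ_k) ∈ Λ(G) satisfies ∑_{i: s_i ≠ 0} ( min{s_i, λ_i} + max{2, d⊥ − 1}·max{0, λ_i − s_i} ) + ∑_{i: s_i = 0} 2·λ_i ≤ n. -/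
open Matrix

section AuxSRR

variable {F : Type} [Field F] {k n : ℕ} {G : Matrix (Fin k) (Fin n) F}

lemma recov_nonempty {i : Fin k} {R : Finset (Fin n)} (h : IsRecoverySet G i R) :
    R.Nonempty := by
  rcases R.eq_empty_or_nonempty with rfl | h'
  · exfalso
    simp only [IsRecoverySet, Finset.coe_empty, Set.image_empty, Submodule.span_empty,
      Submodule.mem_bot] at h
    have := congrFun h i
    simp at this
  · exact h'

lemma recov_singleton {i : Fin k} {ν : Fin n} (h : IsRecoverySet G i {ν}) :
    ∃ c : F, c ≠ 0 ∧ matCol G ν = c • (Pi.single i 1 : Fin k → F) := by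
  unfold IsRecoverySet at h
  rw [Finset.coe_singleton, Set.image_singleton, Submodule.mem_span_singleton] at h
  obtain ⟨a, ha⟩ := h
  have ha0 : a ≠ 0 := by
    rintro rfl
    rw [zero_smul] at ha
    have := congrFun ha i
    simp at this
  exact ⟨a⁻¹, inv_ne_zero ha0, by rw [← ha, smul_smul, inv_mul_cancel₀ ha0, one_smul]⟩

lemma recov_rep {i : Fin k} {R : Finset (Fin n)} (h : IsRecoverySet G i R) :
    ∃ y : Fin n → F, (∀ ν, ν ∉ R → y ν = 0) ∧ G *ᵥ y = Pi.single i 1 := by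
  classical
  let W : Submodule F (Fin n → F) :=
    { carrier := {y | ∀ ν, ν ∉ R → y ν = 0}
      add_mem' := by intro a b ha hb ν hν; simp [ha ν hν, hb ν hν]
      zero_mem' := by intro ν hν; rfl
      smul_mem' := by intro c a ha ν hν; simp [ha ν hν] }
  have hcol' : ∀ ν : Fin n, G.mulVecLin (Pi.single ν 1) = matCol G ν := by
    intro ν; funext r
    simp [Matrix.mulVecLin, Matrix.mulVec, dotProduct, Pi.single_apply, mul_ite, matCol]
  have hle : Submodule.span F (matCol G '' (R : Set (Fin n))) ≤ W.map G.mulVecLin := by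
    rw [Submodule.span_le]
    rintro v ⟨ν, hν, rfl⟩
    exact ⟨Pi.single ν 1, fun μ hμ => Pi.single_eq_of_ne (by rintro rfl; exact hμ hν) 1,
      hcol' ν⟩
  obtain ⟨y, hy, hGy⟩ := hle h
  exact ⟨y, hy, hGy⟩

end AuxSRR

theorem stmt14 {F : Type} [Field F] [Fintype F] [DecidableEq F] {k n : ℕ}
    (hk : 2 ≤ k) (hkn : k < n)
    (G : Matrix (Fin k) (Fin n) F) (hrank : G.rank = k)
    (hcol : ∀ ν, matCol G ν ≠ 0)
    -- `s i` is the number of systematic nodes for object `i`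
    (s : Fin k → ℕ)
    (hs : ∀ i, s i = Nat.card {ν : Fin n // ∃ c : F, c ≠ 0 ∧
      matCol G ν = c • (Pi.single i 1 : Fin k → F)})
    -- `dperp` is the minimum Hamming distance of the dual of the code generated by `G`
    (dperp : ℕ)
    (hdperp : IsLeast {w : ℕ | ∃ x : Fin n → F, x ≠ 0 ∧
      (∀ u : Fin k → F, ∑ ν, x ν * (u ᵥ* G) ν = 0) ∧ w = hammingNorm x} dperp) :
    ∀ lam ∈ SRRG G,
      ∑ i, (if s i = 0 then 2 * lam i
        else min (s i : ℝ) (lam i) +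
          max 2 ((dperp : ℝ) - 1) * max 0 (lam i - (s i : ℝ))) ≤ (n : ℝ) := by
  classical
  intro lam hlam
  obtain ⟨x, hx0, hxrec, hxsum, hxcap⟩ := hlam
  set M : ℝ := max 2 ((dperp : ℝ) - 1) with hM
  have hM2 : (2 : ℝ) ≤ M := le_max_left _ _
  -- the set of systematic nodes for object `i`
  set A : Fin k → Finset (Fin n) := fun i =>
    Finset.univ.filter (fun ν => ∃ c : F, c ≠ 0 ∧
      matCol G ν = c • (Pi.single i 1 : Fin k → F)) with hA
  have hAcard : ∀ i, (A i).card = s i := by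
    intro i
    rw [hs i, Nat.card_eq_fintype_card, Fintype.card_subtype]
  -- a singleton recovery set is a systematic node
  have hsing : ∀ (i : Fin k) (ν : Fin n), IsRecoverySet G i {ν} → ν ∈ A i := by
    intro i ν h
    simp only [hA, Finset.mem_filter, Finset.mem_univ, true_and]
    exact recov_singleton h
  -- recovery sets for objects without systematic nodes have at least 2 elements
  have hge2 : ∀ (i : Fin k) (R : Finset (Fin n)), s i = 0 → IsRecoverySet G i R →
      2 ≤ R.card := by
    intro i R hsi hR
    have h1 : 1 ≤ R.card := (recov_nonempty hR).card_pos
    rcases eq_or_lt_of_le h1 with h1' | h1'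
    · exfalso
      obtain ⟨ν, rfl⟩ := Finset.card_eq_one.mp h1'.symm
      have hmem := hsing i ν hR
      have hne : (A i).card ≠ 0 := Finset.card_ne_zero_of_mem hmem
      rw [hAcard i] at hne
      exact hne hsi
    · exact h1'
  -- recovery sets disjoint from the systematic nodes of object `i` are large
  have hbig : ∀ (i : Fin k) (R : Finset (Fin n)), s i ≠ 0 → IsRecoverySet G i R →
      R ∩ A i = ∅ → M ≤ (R.card : ℝ) := by
    intro i R hsi hR hdisj
    have hRA : ∀ ν ∈ R, ν ∉ A i := fun ν hν hν' =>
      (Finset.eq_empty_iff_forall_notMem.mp hdisj ν (Finset.mem_inter.mpr ⟨hν, hν'⟩))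
    have h2 : 2 ≤ R.card := by
      have h1 : 1 ≤ R.card := (recov_nonempty hR).card_pos
      rcases eq_or_lt_of_le h1 with h1' | h1'
      · exfalso
        obtain ⟨ν, rfl⟩ := Finset.card_eq_one.mp h1'.symm
        exact hRA ν (Finset.mem_singleton_self ν) (hsing i ν hR)
      · exact h1'
    have hd : dperp ≤ R.card + 1 := by
      have hAne : (A i).Nonempty := Finset.card_pos.mp (by rw [hAcard i]; omega)
      obtain ⟨ν0, hν0⟩ := hAne
      obtain ⟨c, hc0, hcol0⟩ : ∃ c : F, c ≠ 0 ∧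
          matCol G ν0 = c • (Pi.single i 1 : Fin k → F) := by
        have := Finset.mem_filter.mp (hA ▸ hν0)
        exact this.2
      have hν0R : ν0 ∉ R := fun h => hRA ν0 h hν0
      obtain ⟨y, hysupp, hGy⟩ := recov_rep hR
      set z : Fin n → F := y - c⁻¹ • (Pi.single ν0 1 : Fin n → F) with hz
      have hzν0 : z ν0 = -c⁻¹ := by
        simp [hz, hysupp ν0 hν0R]
      have hz0 : z ≠ 0 := by
        intro h
        have h' := congrFun h ν0
        rw [hzν0] at h'
        simp only [Pi.zero_apply, neg_eq_zero, inv_eq_zero] at h'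
        exact hc0 h'
      have hGz : G *ᵥ z = 0 := by
        have h1 : G *ᵥ (Pi.single ν0 (1 : F)) = matCol G ν0 := by
          funext r
          simp [Matrix.mulVec, dotProduct, Pi.single_apply, mul_ite, matCol]
        rw [hz, Matrix.mulVec_sub, Matrix.mulVec_smul, h1, hcol0, hGy, smul_smul,
          inv_mul_cancel₀ hc0, one_smul, sub_self]
      have hmem : dperp ≤ hammingNorm z := by
        apply hdperp.2
        refine ⟨z, hz0, ?_, rfl⟩
        intro u
        calc ∑ ν, z ν * (u ᵥ* G) ν = ∑ r, u r * (G *ᵥ z) r := by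
              simp only [Matrix.vecMul, Matrix.mulVec, dotProduct, Finset.mul_sum,
                Finset.sum_mul]
              rw [Finset.sum_comm]
              exact Finset.sum_congr rfl fun ν _ => Finset.sum_congr rfl fun r _ => by ring
          _ = 0 := by simp [hGz]
      have hnorm : hammingNorm z ≤ R.card + 1 := by
        have hsub : (Finset.univ.filter fun ν => z ν ≠ 0) ⊆ insert ν0 R := by
          intro ν hν
          rw [Finset.mem_filter] at hν
          by_contra hmem'
          rw [Finset.mem_insert, not_or] at hmem'
          apply hν.2
          simp [hz, hysupp ν hmem'.2, Pi.single_eq_of_ne hmem'.1]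
        calc hammingNorm z ≤ (insert ν0 R).card := Finset.card_le_card hsub
          _ = R.card + 1 := Finset.card_insert_of_notMem hν0R
      omega
    rw [hM]
    apply max_le
    · exact_mod_cast h2
    · have : (dperp : ℝ) ≤ (R.card : ℝ) + 1 := by exact_mod_cast hd
      linarith
  -- total capacity bound
  have htot : ∑ i, ∑ R : Finset (Fin n), (R.card : ℝ) * x i R ≤ (n : ℝ) := by
    have h1 : ∑ ν : Fin n, ∑ i, ∑ R : Finset (Fin n), (if ν ∈ R then x i R else 0)
        ≤ (n : ℝ) := by
      calc ∑ ν : Fin n, ∑ i, ∑ R : Finset (Fin n), (if ν ∈ R then x i R else 0)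
          ≤ ∑ _ν : Fin n, (1 : ℝ) := Finset.sum_le_sum fun ν _ => hxcap ν
        _ = (n : ℝ) := by simp
    calc ∑ i, ∑ R : Finset (Fin n), (R.card : ℝ) * x i R
        = ∑ i, ∑ R : Finset (Fin n), ∑ ν : Fin n, (if ν ∈ R then x i R else 0) := by
          refine Finset.sum_congr rfl fun i _ => Finset.sum_congr rfl fun R _ => ?_
          rw [Finset.sum_ite_mem, Finset.univ_inter, Finset.sum_const, nsmul_eq_mul]
      _ = ∑ i, ∑ ν : Fin n, ∑ R : Finset (Fin n), (if ν ∈ R then x i R else 0) :=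
          Finset.sum_congr rfl fun i _ => Finset.sum_comm
      _ = ∑ ν : Fin n, ∑ i, ∑ R : Finset (Fin n), (if ν ∈ R then x i R else 0) :=
          Finset.sum_comm
      _ ≤ (n : ℝ) := h1
  -- split the mass of each object
  set a : Fin k → ℝ := fun i =>
    ∑ R : Finset (Fin n), if (R ∩ A i).Nonempty then x i R else 0 with ha
  set b : Fin k → ℝ := fun i =>
    ∑ R : Finset (Fin n), if (R ∩ A i).Nonempty then 0 else x i R with hb
  have hab : ∀ i, a i + b i = lam i := by
    intro i
    rw [← hxsum i, ha, hb, ← Finset.sum_add_distrib]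
    exact Finset.sum_congr rfl fun R _ => by
      by_cases h : (R ∩ A i).Nonempty <;> simp [h]
  have ha0 : ∀ i, 0 ≤ a i := fun i => Finset.sum_nonneg fun R _ => by
    split_ifs
    · exact hx0 i R
    · exact le_rfl
  have hb0 : ∀ i, 0 ≤ b i := fun i => Finset.sum_nonneg fun R _ => by
    split_ifs
    · exact le_rfl
    · exact hx0 i R
  -- capacity of systematic nodes bounds `a i`
  have has : ∀ i, a i ≤ (s i : ℝ) := by
    intro i
    have step1 : a i ≤ ∑ R : Finset (Fin n), ((R ∩ A i).card : ℝ) * x i R := by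
      apply Finset.sum_le_sum
      intro R _
      by_cases h : (R ∩ A i).Nonempty
      · rw [if_pos h]
        have h1 : (1 : ℝ) ≤ ((R ∩ A i).card : ℝ) := by exact_mod_cast h.card_pos
        nlinarith [hx0 i R]
      · rw [if_neg h]
        exact mul_nonneg (Nat.cast_nonneg _) (hx0 i R)
    have step2 : ∑ ν ∈ A i, ∑ R : Finset (Fin n), (if ν ∈ R then x i R else 0)
        = ∑ R : Finset (Fin n), ((R ∩ A i).card : ℝ) * x i R := by
      rw [Finset.sum_comm]
      refine Finset.sum_congr rfl fun R _ => ?_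
      rw [Finset.sum_ite_mem, Finset.sum_const, nsmul_eq_mul, Finset.inter_comm]
    have step3 : ∑ ν ∈ A i, ∑ R : Finset (Fin n), (if ν ∈ R then x i R else 0)
        ≤ (s i : ℝ) := by
      have hν1 : ∀ ν : Fin n, (∑ R : Finset (Fin n), if ν ∈ R then x i R else 0) ≤ 1 := by
        intro ν
        refine le_trans ?_ (hxcap ν)
        exact Finset.single_le_sum
          (f := fun j => ∑ R : Finset (Fin n), if ν ∈ R then x j R else 0)
          (fun j _ => Finset.sum_nonneg fun R _ => by
            split_ifs
            · exact hx0 j R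
            · exact le_rfl)
          (Finset.mem_univ i)
      calc ∑ ν ∈ A i, ∑ R : Finset (Fin n), (if ν ∈ R then x i R else 0)
          ≤ ∑ _ν ∈ A i, (1 : ℝ) := Finset.sum_le_sum fun ν _ => hν1 ν
        _ = ((A i).card : ℝ) := by simp
        _ = (s i : ℝ) := by rw [hAcard i]
    calc a i ≤ _ := step1
      _ = _ := step2.symm
      _ ≤ _ := step3
  -- per-object bound on used capacity
  have hper : ∀ i, (if s i = 0 then 2 * lam i
      else min (s i : ℝ) (lam i) + M * max 0 (lam i - (s i : ℝ)))
      ≤ ∑ R : Finset (Fin n), (R.card : ℝ) * x i R := by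
    intro i
    by_cases hsi : s i = 0
    · rw [if_pos hsi, ← hxsum i, Finset.mul_sum]
      apply Finset.sum_le_sum
      intro R _
      by_cases hxR : x i R = 0
      · simp [hxR]
      · have hrec : IsRecoverySet G i R := by
          by_contra h; exact hxR (hxrec i R h)
        have h2 : (2 : ℝ) ≤ (R.card : ℝ) := by exact_mod_cast hge2 i R hsi hrec
        nlinarith [hx0 i R]
    · rw [if_neg hsi]
      have key : ∑ R : Finset (Fin n), (if (R ∩ A i).Nonempty then x i R else M * x i R)
          ≤ ∑ R : Finset (Fin n), (R.card : ℝ) * x i R := by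
        apply Finset.sum_le_sum
        intro R _
        by_cases hne : (R ∩ A i).Nonempty
        · rw [if_pos hne]
          obtain ⟨ν, hν⟩ := hne
          have hRne : R.Nonempty := ⟨ν, (Finset.mem_inter.mp hν).1⟩
          have h1 : (1 : ℝ) ≤ (R.card : ℝ) := by exact_mod_cast hRne.card_pos
          nlinarith [hx0 i R]
        · rw [if_neg hne]
          by_cases hxR : x i R = 0
          · simp [hxR]
          · have hrec : IsRecoverySet G i R := by
              by_contra h; exact hxR (hxrec i R h)
            have hMR := hbig i R hsi hrec (Finset.not_nonempty_iff_eq_empty.mp hne)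
            nlinarith [hx0 i R]
      have hsplit : ∑ R : Finset (Fin n), (if (R ∩ A i).Nonempty then x i R else M * x i R)
          = a i + M * b i := by
        rw [ha, hb, Finset.mul_sum, ← Finset.sum_add_distrib]
        exact Finset.sum_congr rfl fun R _ => by
          by_cases h : (R ∩ A i).Nonempty <;> simp [h]
      have halam : a i ≤ lam i := by
        have := hab i; have := hb0 i; linarith
      have hfin : min (s i : ℝ) (lam i) + M * max 0 (lam i - (s i : ℝ))
          ≤ a i + M * b i := by
        have hbval : b i = lam i - a i := by linarith [hab i]
        rw [hbval]
        rcases le_total (s i : ℝ) (lam i) with h | h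
        · rw [min_eq_left h, max_eq_right (by linarith : (0 : ℝ) ≤ lam i - (s i : ℝ))]
          nlinarith [has i, hM2]
        · rw [min_eq_right h, max_eq_left (by linarith : lam i - (s i : ℝ) ≤ (0 : ℝ))]
          nlinarith [halam, hM2]
      linarith [key, hsplit ▸ key]
  calc ∑ i, (if s i = 0 then 2 * lam i
        else min (s i : ℝ) (lam i) + M * max 0 (lam i - (s i : ℝ)))
      ≤ ∑ i, ∑ R : Finset (Fin n), (R.card : ℝ) * x i R :=
        Finset.sum_le_sum fun i _ => hper i
    _ ≤ (n : ℝ) := htot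
end

section
/- Let G ∈ F_q^{k×n} be a systematic MDS matrix (its first k columns form the identity and every k columns of G are linearly independent over F_q). Then the max-sum capacity satisfies λ(G) ≤ k + (n − k)/k, where λ(G) = max{ λ_1 + ... + λ_k : (λ_1,...,λ_k) ∈ Λ(G) }. -/
open Matrix

/-- A recovery set for object `i` avoiding the systematic node `i` has at least `k`
elements. -/
lemma recovery_card_ge {F : Type} [Field F] {k n : ℕ} (hkn : k < n)
    (G : Matrix (Fin k) (Fin n) F)
    (hsys : ∀ j : Fin k, matCol G (Fin.castLE hkn.le j) = Pi.single j 1)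
    (hmds : ∀ S : Finset (Fin n), S.card = k →
      LinearIndependent F (fun ν : {x : Fin n // x ∈ S} => matCol G ν.1))
    (i : Fin k) (R : Finset (Fin n)) (hrec : IsRecoverySet G i R)
    (hnot : Fin.castLE hkn.le i ∉ R) : k ≤ R.card := by
  by_contra hcard
  push_neg at hcard
  set c : Fin n := Fin.castLE hkn.le i with hc
  have hins : (insert c R).card ≤ k := by
    rw [Finset.card_insert_of_notMem hnot]
    omega
  obtain ⟨S, hsub, -, hScard⟩ := Finset.exists_subsuperset_card_eq
    (Finset.subset_univ (insert c R)) hins (by simp [Finset.card_univ]; omega)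
  have hli := hmds S hScard
  have hcS : c ∈ S := hsub (Finset.mem_insert_self _ _)
  have hnontriv : Nontrivial F := inferInstance
  have hx : (⟨c, hcS⟩ : {x : Fin n // x ∈ S}) ∉
      {y : {x : Fin n // x ∈ S} | y.1 ∈ R} := by
    simpa using hnot
  have hspan := hli.notMem_span_image (s := {y : {x : Fin n // x ∈ S} | y.1 ∈ R}) hx
  apply hspan
  have himg : (fun ν : {x : Fin n // x ∈ S} => matCol G ν.1) ''
      {y : {x : Fin n // x ∈ S} | y.1 ∈ R} = matCol G '' (R : Set (Fin n)) := by
    ext v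
    constructor
    · rintro ⟨⟨r, hrS⟩, hrR, rfl⟩
      exact ⟨r, hrR, rfl⟩
    · rintro ⟨r, hrR, rfl⟩
      exact ⟨⟨r, hsub (Finset.mem_insert_of_mem hrR)⟩, hrR, rfl⟩
  rw [himg]
  have : matCol G c = Pi.single i 1 := hsys i
  rw [this]
  exact hrec

theorem stmt15 {F : Type} [Field F] [Fintype F] {k n : ℕ}
    (hk : 2 ≤ k) (hkn : k < n)
    (G : Matrix (Fin k) (Fin n) F) (hrank : G.rank = k)
    (hcol : ∀ ν, matCol G ν ≠ 0)
    -- `G` is systematic: its first `k` columns form the identity matrix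
    (hsys : ∀ j : Fin k, matCol G (Fin.castLE hkn.le j) = Pi.single j 1)
    -- `G` is MDS: every `k` columns are linearly independent
    (hmds : ∀ S : Finset (Fin n), S.card = k →
      LinearIndependent F (fun ν : {x : Fin n // x ∈ S} => matCol G ν.1))
    -- `lmax = λ(G)`, the max-sum capacity
    (lmax : ℝ) (hlmax : IsGreatest {y : ℝ | ∃ lam ∈ SRRG G, y = ∑ i, lam i} lmax) :
    lmax ≤ (k : ℝ) + ((n : ℝ) - (k : ℝ)) / (k : ℝ) := by
  obtain ⟨lam, ⟨x, hx0, hxrec, hxsum, hxcap⟩, hy⟩ := hlmax.1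
  set c : Fin k → Fin n := fun i => Fin.castLE hkn.le i with hcdef
  set a : Fin k → ℝ := fun i =>
    ∑ R ∈ Finset.univ.filter (fun R : Finset (Fin n) => c i ∈ R), x i R with ha
  set b : Fin k → ℝ := fun i =>
    ∑ R ∈ Finset.univ.filter (fun R : Finset (Fin n) => ¬ c i ∈ R), x i R with hb
  have hk0 : (0 : ℝ) < (k : ℝ) := by
    have : 0 < k := by omega
    exact_mod_cast this
  -- total capacity bound
  have hcap_tot : ∑ i, ∑ R : Finset (Fin n), (R.card : ℝ) * x i R ≤ (n : ℝ) := by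
    have h1 : ∑ ν : Fin n, ∑ i, ∑ R : Finset (Fin n),
        (if ν ∈ R then x i R else 0) ≤ ∑ _ν : Fin n, (1 : ℝ) :=
      Finset.sum_le_sum fun ν _ => hxcap ν
    have h2 : ∑ ν : Fin n, ∑ i, ∑ R : Finset (Fin n),
        (if ν ∈ R then x i R else 0)
        = ∑ i, ∑ R : Finset (Fin n), (R.card : ℝ) * x i R := by
      rw [Finset.sum_comm]
      refine Finset.sum_congr rfl fun i _ => ?_
      rw [Finset.sum_comm]
      refine Finset.sum_congr rfl fun R _ => ?_
      rw [Finset.sum_ite_mem, Finset.univ_inter, Finset.sum_const, nsmul_eq_mul]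
    rw [h2] at h1
    simpa using h1
  -- per-object lower bound on weighted cardinality sum
  have hlow : ∀ i, a i + (k : ℝ) * b i ≤ ∑ R : Finset (Fin n), (R.card : ℝ) * x i R := by
    intro i
    rw [← Finset.sum_filter_add_sum_filter_not Finset.univ
      (fun R : Finset (Fin n) => c i ∈ R) (fun R => (R.card : ℝ) * x i R)]
    gcongr
    · refine Finset.sum_le_sum fun R hR => ?_
      have hmem : c i ∈ R := (Finset.mem_filter.1 hR).2
      have hcard : (1 : ℝ) ≤ (R.card : ℝ) := by
        have : 0 < R.card := Finset.card_pos.2 ⟨c i, hmem⟩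
        exact_mod_cast this
      nlinarith [hx0 i R]
    · rw [Finset.mul_sum]
      refine Finset.sum_le_sum fun R hR => ?_
      have hmem : c i ∉ R := (Finset.mem_filter.1 hR).2
      by_cases hz : x i R = 0
      · simp [hz]
      · have hrec : IsRecoverySet G i R := by
          by_contra h
          exact hz (hxrec i R h)
        have hcard : (k : ℝ) ≤ (R.card : ℝ) := by
          exact_mod_cast recovery_card_ge hkn G hsys hmds i R hrec hmem
        exact mul_le_mul_of_nonneg_right hcard (hx0 i R)
  have hAB : (∑ i, a i) + (k : ℝ) * ∑ i, b i ≤ (n : ℝ) := by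
    rw [Finset.mul_sum, ← Finset.sum_add_distrib]
    exact le_trans (Finset.sum_le_sum fun i _ => hlow i) hcap_tot
  -- systematic node capacity bound
  have hA : ∑ i, a i ≤ (k : ℝ) := by
    have h1 : ∀ i, a i ≤ 1 := by
      intro i
      have hcap := hxcap (c i)
      have heq : a i = ∑ R : Finset (Fin n), (if c i ∈ R then x i R else 0) := by
        show ∑ R ∈ Finset.univ.filter (fun R : Finset (Fin n) => c i ∈ R), x i R
          = ∑ R : Finset (Fin n), (if c i ∈ R then x i R else 0)
        rw [Finset.sum_filter]
      calc a i = ∑ R : Finset (Fin n), (if c i ∈ R then x i R else 0) := heq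
        _ ≤ ∑ j, ∑ R : Finset (Fin n), (if c i ∈ R then x j R else 0) := by
            refine Finset.single_le_sum (f := fun j => ∑ R : Finset (Fin n), (if c i ∈ R then x j R else 0)) (fun j _ => ?_) (Finset.mem_univ i)
            exact Finset.sum_nonneg fun R _ => by by_cases hm : c i ∈ R <;> simp [hm, hx0 j R]
        _ ≤ 1 := hcap
    calc ∑ i, a i ≤ ∑ _i : Fin k, (1 : ℝ) := Finset.sum_le_sum fun i _ => h1 i
      _ = (k : ℝ) := by simp
  have hlamsum : ∑ i, lam i = (∑ i, a i) + ∑ i, b i := by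
    rw [← Finset.sum_add_distrib]
    refine Finset.sum_congr rfl fun i _ => ?_
    rw [← hxsum i, ha, hb]
    exact (Finset.sum_filter_add_sum_filter_not _ _ _).symm
  -- final arithmetic
  have hBnn : 0 ≤ ∑ i, b i :=
    Finset.sum_nonneg fun i _ => Finset.sum_nonneg fun R _ => hx0 i R
  have hk2 : (2 : ℝ) ≤ (k : ℝ) := by exact_mod_cast hk
  have hdiv : (k : ℝ) * (((n : ℝ) - (k : ℝ)) / (k : ℝ)) = (n : ℝ) - (k : ℝ) := by
    field_simp
  rw [hy, hlamsum]
  set A := ∑ i, a i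
  set B := ∑ i, b i
  nlinarith [mul_nonneg (sub_nonneg.2 hA) (by linarith [hk2] : (0:ℝ) ≤ (k:ℝ) - 1), hAB, hdiv, hk0]
end

section
/- Let G ∈ F_q^{2×n} be a systematic MDS matrix with n ≥ 4. Then the 2-dimensional Lebesgue measure of the service rate region Λ(G) ⊆ ℝ² equals (n² + 4n)/8. -/
open Matrix

section Part1
variable {F : Type} [Field F] {n : ℕ} (h2 : 2 ≤ n)
  (G : Matrix (Fin 2) (Fin n) F)
  (hsys : ∀ j : Fin 2, matCol G (Fin.castLE h2 j) = Pi.single j 1)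
  (hmds : ∀ S : Finset (Fin n), S.card = 2 →
      LinearIndependent F (fun ν : {x : Fin n // x ∈ S} => matCol G ν.1))

include hmds in
lemma span_pair_top {a b : Fin n} (hab : a ≠ b) :
    Submodule.span F (matCol G '' ({a, b} : Finset (Fin n))) = ⊤ := by
  have hcard : ({a, b} : Finset (Fin n)).card = 2 := by
    rw [Finset.card_insert_of_notMem (by simpa using hab), Finset.card_singleton]
  have hli := hmds _ hcard
  have hne : Nonempty {x : Fin n // x ∈ ({a,b} : Finset (Fin n))} :=
    ⟨⟨a, by simp⟩⟩
  have := hli.span_eq_top_of_card_eq_finrank (by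
    rw [Fintype.card_coe, hcard, Module.finrank_pi, Fintype.card_fin])
  rw [← this]
  congr 1
  ext v
  constructor
  · rintro ⟨x, hx, rfl⟩; exact ⟨⟨x, hx⟩, rfl⟩
  · rintro ⟨⟨x, hx⟩, rfl⟩; exact ⟨x, hx, rfl⟩

include hmds in
lemma rec_of_two {a b : Fin n} (hab : a ≠ b) {R : Finset (Fin n)} (ha : a ∈ R) (hb : b ∈ R)
    (i : Fin 2) : IsRecoverySet G i R := by
  have h1 : Submodule.span F (matCol G '' ({a, b} : Finset (Fin n))) ≤
      Submodule.span F (matCol G '' (R : Set (Fin n))) := by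
    apply Submodule.span_mono
    apply Set.image_mono
    intro x hx
    simp at hx
    rcases hx with rfl | rfl <;> simpa
  rw [span_pair_top G hmds hab] at h1
  exact h1 (by trivial)


include hsys in
lemma rec_of_mem {i : Fin 2} {R : Finset (Fin n)} (h : Fin.castLE h2 i ∈ R) :
    IsRecoverySet G i R := by
  rw [IsRecoverySet, ← hsys i]
  exact Submodule.subset_span ⟨_, by simpa using h, rfl⟩

lemma not_rec_empty (i : Fin 2) : ¬ IsRecoverySet G i (∅ : Finset (Fin n)) := by
  rw [IsRecoverySet]
  simp only [Finset.coe_empty, Set.image_empty, Submodule.span_empty,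
    Submodule.mem_bot]
  intro h
  have := congrFun h i
  simp at this

include hsys hmds in
lemma not_rec_singleton {i : Fin 2} {ν : Fin n} (hν : ν ≠ Fin.castLE h2 i) :
    ¬ IsRecoverySet G i ({ν} : Finset (Fin n)) := by
  intro hrec
  rw [IsRecoverySet] at hrec
  simp only [Finset.coe_singleton, Set.image_singleton] at hrec
  rw [Submodule.mem_span_singleton] at hrec
  obtain ⟨c, hc⟩ := hrec
  set u : Fin n := Fin.castLE h2 i with hu
  set S : Finset (Fin n) := {u, ν} with hS
  have hcard : S.card = 2 := by
    rw [hS, Finset.card_insert_of_notMem (by simpa using hν.symm),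
      Finset.card_singleton]
  have hli := hmds S hcard
  rw [linearIndependent_iff'] at hli
  set g : {x : Fin n // x ∈ S} → F := fun x => if (x : Fin n) = u then -1 else c with hg
  have hsum : ∑ x : {x : Fin n // x ∈ S}, g x • matCol G (x : Fin n) = 0 := by
    rw [Finset.sum_coe_sort S (fun a => (if a = u then (-1 : F) else c) • matCol G a)]
    rw [hS, Finset.sum_insert (by simpa using hν.symm), Finset.sum_singleton]
    rw [if_pos rfl, if_neg hν]
    rw [hsys i, hc]
    simp
  have := hli Finset.univ g (by simpa using hsum) ⟨u, by simp [hS]⟩ (Finset.mem_univ _)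
  rw [hg] at this
  simp at this

include hsys hmds in
lemma rec_card {i : Fin 2} {R : Finset (Fin n)} (hrec : IsRecoverySet G i R) :
    Fin.castLE h2 i ∈ R ∨ 2 ≤ R.card := by
  by_contra hcon
  push_neg at hcon
  obtain ⟨hmem, hcard⟩ := hcon
  interval_cases hc : R.card
  · rw [Finset.card_eq_zero] at hc
    exact not_rec_empty G i (hc ▸ hrec)
  · rw [Finset.card_eq_one] at hc
    obtain ⟨ν, rfl⟩ := hc
    have hν : ν ≠ Fin.castLE h2 i := by
      rintro rfl; exact hmem (Finset.mem_singleton_self _)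
    exact not_rec_singleton h2 G hsys hmds hν hrec


include hsys hmds in
lemma rec_char {i : Fin 2} {R : Finset (Fin n)} (hrec : IsRecoverySet G i R) :
    R = {Fin.castLE h2 i} ∨ 2 ≤ R.card := by
  rcases rec_card h2 G hsys hmds hrec with hm | hc
  · by_cases hc2 : 2 ≤ R.card
    · right; exact hc2
    · left
      have h1 : R.card = 1 := by
        have : 1 ≤ R.card := Finset.card_pos.2 ⟨_, hm⟩
        omega
      obtain ⟨ν, hν⟩ := Finset.card_eq_one.1 h1
      subst hν
      rw [Finset.mem_singleton] at hm
      rw [hm]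
  · right; exact hc

end Part1

def Pset (n : ℕ) : Set (Fin 2 → ℝ) :=
  {l | 0 ≤ l 0 ∧ 0 ≤ l 1 ∧ l 0 + l 1 ≤ ((n : ℝ) + 2) / 2 ∧
    2 * l 0 + l 1 ≤ (n : ℝ) + 1 ∧ l 0 + 2 * l 1 ≤ (n : ℝ) + 1}

section
variable {F : Type} [Field F] {n : ℕ} (h2 : 2 ≤ n)
  (G : Matrix (Fin 2) (Fin n) F)

-- assume the characterization as hypothesis for now
variable (hchar : ∀ (i : Fin 2) (R : Finset (Fin n)), IsRecoverySet G i R →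
    R = {Fin.castLE h2 i} ∨ 2 ≤ R.card)

include hchar in
lemma srrg_subset : SRRG G ⊆ Pset n := by
  rintro lam ⟨x, hpos, hsupp, hsum, hnode⟩
  set c : Fin 2 → Fin n := fun i => Fin.castLE h2 i with hc
  -- pointwise bounds
  have hpw1 : ∀ (i : Fin 2) (R : Finset (Fin n)),
      2 * x i R - (if R = {c i} then x i R else 0) ≤ (R.card : ℝ) * x i R := by
    intro i R
    by_cases hx : x i R = 0
    · simp [hx]
    · rcases hchar i R (by by_contra hcon; exact hx (hsupp i R hcon)) with h | h
      · rw [if_pos h, h]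
        simp only [Finset.card_singleton, Nat.cast_one, one_mul]
        linarith
      · rw [if_neg (by rintro rfl; simp at h)]
        have : (2 : ℝ) ≤ (R.card : ℝ) := by exact_mod_cast h
        nlinarith [hpos i R]
  have hpw2 : ∀ (i : Fin 2) (R : Finset (Fin n)), x i R ≤ (R.card : ℝ) * x i R := by
    intro i R
    by_cases hx : x i R = 0
    · simp [hx]
    · rcases hchar i R (by by_contra hcon; exact hx (hsupp i R hcon)) with h | h
      · rw [h]; simp
      · have : (2 : ℝ) ≤ (R.card : ℝ) := by exact_mod_cast h
        nlinarith [hpos i R]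
  -- total capacity bound
  have hswap : ∀ i : Fin 2, ∑ ν : Fin n, ∑ R : Finset (Fin n),
      (if ν ∈ R then x i R else 0) = ∑ R : Finset (Fin n), (R.card : ℝ) * x i R := by
    intro i
    rw [Finset.sum_comm]
    refine Finset.sum_congr rfl fun R _ => ?_
    rw [Finset.sum_ite_mem, Finset.univ_inter, Finset.sum_const, nsmul_eq_mul]
  have htot : ∑ i : Fin 2, ∑ R : Finset (Fin n), (R.card : ℝ) * x i R ≤ (n : ℝ) := by
    calc ∑ i : Fin 2, ∑ R : Finset (Fin n), (R.card : ℝ) * x i R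
        = ∑ i : Fin 2, ∑ ν : Fin n, ∑ R : Finset (Fin n), (if ν ∈ R then x i R else 0) :=
          Finset.sum_congr rfl fun i _ => (hswap i).symm
      _ = ∑ ν : Fin n, ∑ i : Fin 2, ∑ R : Finset (Fin n), (if ν ∈ R then x i R else 0) :=
          Finset.sum_comm
      _ ≤ ∑ ν : Fin n, 1 := Finset.sum_le_sum fun ν _ => hnode ν
      _ = (n : ℝ) := by simp
  -- dedicated singleton bound
  have hX : ∀ i : Fin 2, x i {c i} ≤ 1 := by
    intro i
    refine le_trans ?_ (hnode (c i))
    have h1 : ∀ j : Fin 2, (0 : ℝ) ≤ ∑ R : Finset (Fin n), (if c i ∈ R then x j R else 0) :=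
      fun j => Finset.sum_nonneg fun R _ => by
        split_ifs; exacts [hpos j R, le_rfl]
    have h2' : (if c i ∈ ({c i} : Finset (Fin n)) then x i {c i} else 0) ≤
        ∑ R : Finset (Fin n), (if c i ∈ R then x i R else 0) :=
      Finset.single_le_sum (f := fun R => if c i ∈ R then x i R else 0)
        (fun R _ => by split_ifs; exacts [hpos i R, le_rfl]) (Finset.mem_univ _)
    rw [if_pos (Finset.mem_singleton_self _)] at h2'
    refine le_trans h2' ?_
    exact Finset.single_le_sum
      (f := fun j => ∑ R : Finset (Fin n), (if c i ∈ R then x j R else 0))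
      (fun j _ => h1 j) (Finset.mem_univ i)
  -- aggregated bounds per object
  have HA : ∀ i : Fin 2, 2 * lam i - x i {c i} ≤ ∑ R : Finset (Fin n), (R.card : ℝ) * x i R := by
    intro i
    have := Finset.sum_le_sum (fun R (_ : R ∈ Finset.univ) => hpw1 i R)
    rw [Finset.sum_sub_distrib, ← Finset.mul_sum, hsum i, Finset.sum_ite_eq' Finset.univ ({c i} : Finset (Fin n)) (x i), if_pos (Finset.mem_univ _)] at this
    exact this
  have HB : ∀ i : Fin 2, lam i ≤ ∑ R : Finset (Fin n), (R.card : ℝ) * x i R := by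
    intro i
    have := Finset.sum_le_sum (fun R (_ : R ∈ Finset.univ) => hpw2 i R)
    rwa [hsum i] at this
  have h00 : 0 ≤ lam 0 := by rw [← hsum 0]; exact Finset.sum_nonneg fun R _ => hpos 0 R
  have h01 : 0 ≤ lam 1 := by rw [← hsum 1]; exact Finset.sum_nonneg fun R _ => hpos 1 R
  rw [Fin.sum_univ_two] at htot
  refine ⟨h00, h01, ?_, ?_, ?_⟩
  · linarith [HA 0, HA 1, hX 0, hX 1]
  · linarith [HA 0, HB 1, hX 0]
  · linarith [HB 0, HA 1, hX 1]

end

-- helper: indicator sums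
lemma sum_single_set {n : ℕ} (S : Finset (Fin n)) (c : ℝ) :
    ∑ R : Finset (Fin n), (if R = S then c else 0) = c := by
  rw [Finset.sum_ite_eq' Finset.univ S (fun _ => c), if_pos (Finset.mem_univ _)]

lemma sum_single_set_mem {n : ℕ} (S : Finset (Fin n)) (c : ℝ) (ν : Fin n) :
    ∑ R : Finset (Fin n), (if ν ∈ R then (if R = S then c else 0) else 0)
      = if ν ∈ S then c else 0 := by
  have h : ∀ R : Finset (Fin n), (if ν ∈ R then (if R = S then c else 0) else 0)
      = (if R = S then (if ν ∈ S then c else 0) else 0) := by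
    intro R
    by_cases hR : R = S
    · subst hR; by_cases hν : ν ∈ R <;> simp [hν]
    · simp [hR]
  rw [Finset.sum_congr rfl fun R _ => h R,
    Finset.sum_ite_eq' Finset.univ S (fun _ => if ν ∈ S then c else 0),
    if_pos (Finset.mem_univ _)]

lemma sum_ne_count {n : ℕ} (O : Finset (Fin n)) (ν : Fin n) (hν : ν ∈ O) (d : ℝ) :
    ∑ o ∈ O, (if o ≠ ν then d else 0) = (O.card : ℝ) * d - d := by
  have h : ∀ o : Fin n, (if o ≠ ν then d else 0) = d - (if o = ν then d else 0) := by
    intro o; by_cases h : o = ν <;> simp [h]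
  rw [Finset.sum_congr rfl fun o _ => h o, Finset.sum_sub_distrib, Finset.sum_const,
    Finset.sum_ite_eq' O ν (fun _ => d), if_pos hν, nsmul_eq_mul]

lemma offDiag_count {n : ℕ} (O : Finset (Fin n)) (ν : Fin n) (hν : ν ∈ O) (d : ℝ) :
    ∑ p ∈ O.offDiag, (if ν ∈ ({p.1, p.2} : Finset (Fin n)) then d else 0)
      = 2 * ((O.card : ℝ) - 1) * d := by
  have hdef : O.offDiag = (O ×ˢ O).filter (fun a => a.1 ≠ a.2) := by
    ext a; simp [Finset.mem_offDiag, and_assoc]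
  rw [hdef, Finset.sum_filter, Finset.sum_product]
  have hinner : ∀ o ∈ O, (∑ o' ∈ O, if o ≠ o' then
      (if ν ∈ ({o, o'} : Finset (Fin n)) then d else 0) else 0)
      = if o = ν then ((O.card : ℝ) * d - d) else d := by
    intro o _
    by_cases ho : o = ν
    · subst ho
      rw [if_pos rfl, ← sum_ne_count O o hν d]
      refine Finset.sum_congr rfl fun o' _ => ?_
      by_cases h : o = o'
      · simp [h]
      · simp [h, Ne.symm h]
    · rw [if_neg ho]
      have : ∀ o' ∈ O, (if o ≠ o' then
          (if ν ∈ ({o, o'} : Finset (Fin n)) then d else 0) else 0)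
          = if o' = ν then d else 0 := by
        intro o' _
        by_cases h' : o' = ν
        · subst h'
          simp [ho]
        · by_cases h : o = o'
          · simp [h, h']
          · rw [if_pos h, if_neg h', if_neg]
            simp only [Finset.mem_insert, Finset.mem_singleton]
            rintro (rfl | rfl)
            · exact ho rfl
            · exact h' rfl
      rw [Finset.sum_congr rfl this, Finset.sum_ite_eq' O ν (fun _ => d), if_pos hν]
  rw [Finset.sum_congr rfl hinner]
  have h2 : ∀ o : Fin n, (if o = ν then ((O.card : ℝ) * d - d) else d)
      = (if o = ν then ((O.card : ℝ) * d - 2 * d) else 0) + d := by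
    intro o; by_cases h : o = ν <;> simp [h]; ring
  rw [Finset.sum_congr rfl fun o _ => h2 o, Finset.sum_add_distrib, Finset.sum_const,
    Finset.sum_ite_eq' O ν _, if_pos hν, nsmul_eq_mul]
  ring

section
variable {F : Type} [Field F] {n : ℕ}

lemma mem_srrg (h2 : 2 ≤ n) (G : Matrix (Fin 2) (Fin n) F)
    (hrecmem : ∀ (i : Fin 2) (R : Finset (Fin n)), Fin.castLE h2 i ∈ R → IsRecoverySet G i R)
    (hrec2 : ∀ (i : Fin 2) {a b : Fin n} (R : Finset (Fin n)), a ≠ b → a ∈ R → b ∈ R →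
      IsRecoverySet G i R)
    (hn : 4 ≤ n)
    (s t u0 u1 w0 w1 : ℝ)
    (hs0 : 0 ≤ s) (ht0 : 0 ≤ t) (hu00 : 0 ≤ u0) (hu10 : 0 ≤ u1)
    (hw00 : 0 ≤ w0) (hw10 : 0 ≤ w1)
    (hs : s + w1 ≤ 1) (ht : t + w0 ≤ 1)
    (hu : 2 * u0 + 2 * u1 + w0 + w1 ≤ (n : ℝ) - 2) :
    ![s + u0 + w0, t + u1 + w1] ∈ SRRG G := by
  classical
  have hnR : (4 : ℝ) ≤ (n : ℝ) := by exact_mod_cast hn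
  set c0 : Fin n := Fin.castLE h2 0 with hc0def
  set c1 : Fin n := Fin.castLE h2 1 with hc1def
  have hc01 : c0 ≠ c1 := by
    intro h
    have := congrArg Fin.val h
    simp [hc0def, hc1def] at this
  set O : Finset (Fin n) := Finset.univ \ {c0, c1} with hOdef
  have hOcard : O.card = n - 2 := by
    have hcc : ({c0, c1} : Finset (Fin n)).card = 2 := by
      rw [Finset.card_insert_of_notMem (by simpa using hc01), Finset.card_singleton]
    rw [hOdef, Finset.card_sdiff_of_subset (Finset.subset_univ _), Finset.card_univ, Fintype.card_fin, hcc]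
  have hOcardR : (O.card : ℝ) = (n : ℝ) - 2 := by
    rw [hOcard, Nat.cast_sub h2]; norm_num
  have memO : ∀ o : Fin n, o ∈ O ↔ o ≠ c0 ∧ o ≠ c1 := by
    intro o
    simp [hOdef, Finset.mem_sdiff, not_or]
  have hc0O : c0 ∉ O := by rw [memO]; tauto
  have hc1O : c1 ∉ O := by rw [memO]; tauto
  have hm2 : (0 : ℝ) < (n : ℝ) - 2 := by linarith
  have hm3 : (0 : ℝ) < (n : ℝ) - 3 := by linarith
  set d0 : ℝ := u0 / (((n : ℝ) - 2) * ((n : ℝ) - 3)) with hd0def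
  set d1 : ℝ := u1 / (((n : ℝ) - 2) * ((n : ℝ) - 3)) with hd1def
  set e0 : ℝ := w0 / ((n : ℝ) - 2) with he0def
  set e1 : ℝ := w1 / ((n : ℝ) - 2) with he1def
  have hd00 : 0 ≤ d0 := div_nonneg hu00 (by positivity)
  have hd10 : 0 ≤ d1 := div_nonneg hu10 (by positivity)
  have he00 : 0 ≤ e0 := div_nonneg hw00 (by positivity)
  have he10 : 0 ≤ e1 := div_nonneg hw10 (by positivity)
  have hoffR : (O.offDiag.card : ℝ) = ((n : ℝ) - 2) * ((n : ℝ) - 3) := by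
    rw [Finset.offDiag_card]
    have hle : O.card ≤ O.card * O.card :=
      Nat.le_mul_of_pos_left _ (by rw [hOcard]; omega)
    rw [Nat.cast_sub hle]
    push_cast
    rw [hOcardR]; ring
  set x : Fin 2 → Finset (Fin n) → ℝ := fun i R =>
    if i = 0 then
      (if R = {c0} then s else 0)
        + (∑ p ∈ O.offDiag, if R = ({p.1, p.2} : Finset (Fin n)) then d0 else 0)
        + (∑ o ∈ O, if R = {c1, o} then e0 else 0)
    else
      (if R = {c1} then t else 0)
        + (∑ p ∈ O.offDiag, if R = ({p.1, p.2} : Finset (Fin n)) then d1 else 0)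
        + (∑ o ∈ O, if R = {c0, o} then e1 else 0) with hxdef
  refine ⟨x, ?_, ?_, ?_, ?_⟩
  · -- nonneg
    intro i R
    simp only [hxdef]
    split_ifs <;>
      refine add_nonneg (add_nonneg ?_ ?_) ?_ <;>
      first
        | assumption
        | exact le_rfl
        | exact Finset.sum_nonneg fun _ _ => by
            split_ifs <;> first | assumption | exact le_rfl
  · -- support
    intro i R hR
    simp only [hxdef]
    have hpair : ∀ (p : Fin n × Fin n), p ∈ O.offDiag →
        R ≠ ({p.1, p.2} : Finset (Fin n)) := by
      intro p hp h
      rw [Finset.mem_offDiag] at hp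
      exact hR (h ▸ hrec2 i ({p.1, p.2} : Finset (Fin n)) hp.2.2 (by simp) (by simp))
    by_cases hi : i = 0
    · rw [if_pos hi]
      rw [if_neg (fun h : R = {c0} => hR (by
        subst h
        exact hrecmem i _ (by rw [hi]; exact Finset.mem_singleton_self _)))]
      rw [Finset.sum_eq_zero (fun p hp => if_neg (hpair p hp)),
        Finset.sum_eq_zero (fun o ho => if_neg (fun h : R = {c1, o} => hR (h ▸
          hrec2 i _ (fun hco => ((memO o).1 ho).2 hco.symm) (Finset.mem_insert_self _ _)
            (by simp))))]
      ring
    · rw [if_neg hi]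
      rw [if_neg (fun h : R = {c1} => hR (by
        subst h
        have hi1 : i = 1 := by omega
        exact hrecmem i _ (by rw [hi1]; exact Finset.mem_singleton_self _)))]
      rw [Finset.sum_eq_zero (fun p hp => if_neg (hpair p hp)),
        Finset.sum_eq_zero (fun o ho => if_neg (fun h : R = {c0, o} => hR (h ▸
          hrec2 i _ (fun hco => ((memO o).1 ho).1 hco.symm) (Finset.mem_insert_self _ _)
            (by simp))))]
      ring
  · -- totals
    have hB : ∀ d : ℝ, (∑ R : Finset (Fin n), ∑ p ∈ O.offDiag,
        if R = ({p.1, p.2} : Finset (Fin n)) then d else 0)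
        = ((n : ℝ) - 2) * ((n : ℝ) - 3) * d := by
      intro d
      rw [Finset.sum_comm]
      rw [Finset.sum_congr rfl fun p _ => sum_single_set ({p.1, p.2} : Finset (Fin n)) d]
      rw [Finset.sum_const, nsmul_eq_mul, hoffR]
    have hC : ∀ (c : Fin n) (e : ℝ), (∑ R : Finset (Fin n), ∑ o ∈ O,
        if R = ({c, o} : Finset (Fin n)) then e else 0) = ((n : ℝ) - 2) * e := by
      intro c e
      rw [Finset.sum_comm]
      rw [Finset.sum_congr rfl fun o _ => sum_single_set ({c, o} : Finset (Fin n)) e]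
      rw [Finset.sum_const, nsmul_eq_mul, hOcardR]
    intro i
    fin_cases i
    · show (∑ R : Finset (Fin n), x 0 R) = s + u0 + w0
      simp only [hxdef]
      simp only [eq_self_iff_true, if_true]
      rw [Finset.sum_add_distrib, Finset.sum_add_distrib, sum_single_set, hB, hC]
      rw [hd0def, he0def]
      show s + ((n:ℝ)-2) * ((n:ℝ)-3) * (u0 / (((n:ℝ)-2) * ((n:ℝ)-3)))
        + ((n:ℝ)-2) * (w0 / ((n:ℝ)-2)) = s + u0 + w0
      field_simp
    · show (∑ R : Finset (Fin n), x 1 R) = t + u1 + w1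
      simp only [hxdef]
      simp only [if_neg (by decide : ¬ (1 : Fin 2) = 0)]
      rw [Finset.sum_add_distrib, Finset.sum_add_distrib, sum_single_set, hB, hC]
      rw [hd1def, he1def]
      show t + ((n:ℝ)-2) * ((n:ℝ)-3) * (u1 / (((n:ℝ)-2) * ((n:ℝ)-3)))
        + ((n:ℝ)-2) * (w1 / ((n:ℝ)-2)) = t + u1 + w1
      field_simp
  · -- node constraints
    intro ν
    have hsplit : ∀ (A B C : Finset (Fin n) → ℝ) (ν : Fin n),
        (∑ R : Finset (Fin n), if ν ∈ R then A R + B R + C R else 0)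
        = (∑ R : Finset (Fin n), if ν ∈ R then A R else 0)
          + (∑ R : Finset (Fin n), if ν ∈ R then B R else 0)
          + (∑ R : Finset (Fin n), if ν ∈ R then C R else 0) := by
      intro A B C ν
      rw [← Finset.sum_add_distrib, ← Finset.sum_add_distrib]
      refine Finset.sum_congr rfl fun R _ => ?_
      split_ifs <;> simp
    have hBnode : ∀ d : ℝ, (∑ R : Finset (Fin n), if ν ∈ R then
        (∑ p ∈ O.offDiag, if R = ({p.1, p.2} : Finset (Fin n)) then d else 0) else 0)
        = ∑ p ∈ O.offDiag, (if ν ∈ ({p.1, p.2} : Finset (Fin n)) then d else 0) := by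
      intro d
      have : ∀ R : Finset (Fin n), (if ν ∈ R then
          (∑ p ∈ O.offDiag, if R = ({p.1, p.2} : Finset (Fin n)) then d else 0) else 0)
          = ∑ p ∈ O.offDiag, (if ν ∈ R then
              (if R = ({p.1, p.2} : Finset (Fin n)) then d else 0) else 0) := by
        intro R
        split_ifs with h
        · rfl
        · rw [Finset.sum_eq_zero]; intro p _; rfl
      rw [Finset.sum_congr rfl fun R _ => this R, Finset.sum_comm]
      exact Finset.sum_congr rfl fun p _ => sum_single_set_mem _ d ν
    have hCnode : ∀ (c : Fin n) (e : ℝ), (∑ R : Finset (Fin n), if ν ∈ R then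
        (∑ o ∈ O, if R = ({c, o} : Finset (Fin n)) then e else 0) else 0)
        = ∑ o ∈ O, (if ν ∈ ({c, o} : Finset (Fin n)) then e else 0) := by
      intro c e
      have : ∀ R : Finset (Fin n), (if ν ∈ R then
          (∑ o ∈ O, if R = ({c, o} : Finset (Fin n)) then e else 0) else 0)
          = ∑ o ∈ O, (if ν ∈ R then
              (if R = ({c, o} : Finset (Fin n)) then e else 0) else 0) := by
        intro R
        split_ifs with h
        · rfl
        · rw [Finset.sum_eq_zero]; intro o _; rfl
      rw [Finset.sum_congr rfl fun R _ => this R, Finset.sum_comm]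
      exact Finset.sum_congr rfl fun o _ => sum_single_set_mem _ e ν
    rw [Fin.sum_univ_two]
    simp only [hxdef]
    simp only [eq_self_iff_true, if_true, if_neg (by decide : ¬ (1 : Fin 2) = 0)]
    rw [hsplit, hsplit, sum_single_set_mem, sum_single_set_mem, hBnode, hBnode,
      hCnode, hCnode]
    have hZB : ∀ (w : Fin n), w ∉ O → ∀ d : ℝ,
        (∑ p ∈ O.offDiag, if w ∈ ({p.1, p.2} : Finset (Fin n)) then d else 0) = 0 := by
      intro w hw d
      refine Finset.sum_eq_zero fun p hp => ?_
      rw [Finset.mem_offDiag] at hp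
      rw [if_neg]
      simp only [Finset.mem_insert, Finset.mem_singleton]
      rintro (rfl | rfl)
      exacts [hw hp.1, hw hp.2.1]
    have hZC : ∀ (c w : Fin n), w ≠ c → w ∉ O → ∀ e : ℝ,
        (∑ o ∈ O, if w ∈ ({c, o} : Finset (Fin n)) then e else 0) = 0 := by
      intro c w hwc hw e
      refine Finset.sum_eq_zero fun o ho => ?_
      rw [if_neg]
      simp only [Finset.mem_insert, Finset.mem_singleton]
      rintro (h | rfl)
      exacts [hwc h, hw ho]
    have hAC : ∀ (c : Fin n) (e : ℝ),
        (∑ o ∈ O, if c ∈ ({c, o} : Finset (Fin n)) then e else 0) = ((n:ℝ) - 2) * e := by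
      intro c e
      rw [Finset.sum_congr rfl (fun o _ => if_pos (Finset.mem_insert_self _ _)),
        Finset.sum_const, nsmul_eq_mul, hOcardR]
    have hPC : ∀ (c w : Fin n), w ∈ O → w ≠ c → ∀ e : ℝ,
        (∑ o ∈ O, if w ∈ ({c, o} : Finset (Fin n)) then e else 0) = e := by
      intro c w hwO hwc e
      have hpt : ∀ o ∈ O, (if w ∈ ({c, o} : Finset (Fin n)) then e else 0)
          = if o = w then e else 0 := by
        intro o _
        by_cases h : o = w
        · subst h; rw [if_pos (by simp), if_pos rfl]
        · rw [if_neg, if_neg h]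
          simp only [Finset.mem_insert, Finset.mem_singleton]
          rintro (h' | h')
          exacts [hwc h', h h'.symm]
      rw [Finset.sum_congr rfl hpt, Finset.sum_ite_eq' O w (fun _ => e), if_pos hwO]
    by_cases hν0 : ν = c0
    · subst hν0
      rw [if_pos (Finset.mem_singleton_self _), if_neg (by simpa using hc01),
        hZB c0 hc0O d0, hZB c0 hc0O d1, hZC c1 c0 hc01 hc0O e0, hAC c0 e1]
      have hw : ((n:ℝ)-2) * e1 = w1 := by rw [he1def]; field_simp
      rw [hw]
      linarith
    · by_cases hν1 : ν = c1
      · subst hν1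
        rw [if_neg (by simpa using (Ne.symm hc01)), if_pos (Finset.mem_singleton_self _),
          hZB c1 hc1O d0, hZB c1 hc1O d1, hAC c1 e0, hZC c0 c1 (Ne.symm hc01) hc1O e1]
        have hw : ((n:ℝ)-2) * e0 = w0 := by rw [he0def]; field_simp
        rw [hw]
        linarith
      · have hνO : ν ∈ O := (memO ν).2 ⟨hν0, hν1⟩
        rw [if_neg (by simpa using hν0), if_neg (by simpa using hν1),
          offDiag_count O ν hνO d0, offDiag_count O ν hνO d1,
          hPC c1 ν hνO hν1 e0, hPC c0 ν hνO hν0 e1, hOcardR,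
          hd0def, hd1def, he0def, he1def]
        have heq : 0 + 2 * ((n:ℝ) - 2 - 1) * (u0 / (((n:ℝ) - 2) * ((n:ℝ) - 3))) + w0 / ((n:ℝ) - 2) +
            (0 + 2 * ((n:ℝ) - 2 - 1) * (u1 / (((n:ℝ) - 2) * ((n:ℝ) - 3))) + w1 / ((n:ℝ) - 2))
            = (2 * u0 + 2 * u1 + w0 + w1) / ((n:ℝ) - 2) := by
          field_simp
          ring
        rw [heq, div_le_one hm2]
        exact hu

end


lemma lin_int (a b c d : ℝ) : ∫ z in a..b, (c + d * z) = c * (b - a) + d * (b ^ 2 - a ^ 2) / 2 := by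
  have h1 : IntervalIntegrable (fun z : ℝ => d * z) MeasureTheory.volume a b := by
    apply Continuous.intervalIntegrable
    exact continuous_const.mul continuous_id
  rw [intervalIntegral.integral_add intervalIntegrable_const h1,
    intervalIntegral.integral_const, intervalIntegral.integral_const_mul, integral_id]
  ring_nf

lemma volume_pset {n : ℕ} (hn : 4 ≤ n) :
    MeasureTheory.volume (Pset n) = ENNReal.ofReal (((n : ℝ) ^ 2 + 4 * (n : ℝ)) / 8) := by
  have hnR : (4 : ℝ) ≤ (n : ℝ) := by exact_mod_cast hn
  set N : ℝ := (n : ℝ) with hN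
  set f : ℝ → ℝ := fun z => min ((N + 2) / 2 - z) (min (N + 1 - 2 * z) ((N + 1 - z) / 2))
    with hf
  have hfc : Continuous f := by
    apply Continuous.min
    · continuity
    · exact Continuous.min (by continuity) (by continuity)
  set Q : Set (ℝ × ℝ) := {p | 0 ≤ p.1 ∧ 0 ≤ p.2 ∧ p.1 + p.2 ≤ (N + 2) / 2 ∧
    2 * p.1 + p.2 ≤ N + 1 ∧ p.1 + 2 * p.2 ≤ N + 1} with hQ
  have hQmeas : MeasurableSet Q := by
    rw [hQ]
    apply MeasurableSet.inter
    · exact measurableSet_le measurable_const measurable_fst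
    apply MeasurableSet.inter
    · exact measurableSet_le measurable_const measurable_snd
    apply MeasurableSet.inter
    · exact measurableSet_le (measurable_fst.add measurable_snd) measurable_const
    apply MeasurableSet.inter
    · exact measurableSet_le ((measurable_fst.const_mul 2).add measurable_snd) measurable_const
    · exact measurableSet_le (measurable_fst.add (measurable_snd.const_mul 2)) measurable_const
  have hpre : Pset n = (MeasurableEquiv.finTwoArrow : (Fin 2 → ℝ) ≃ᵐ (ℝ × ℝ)) ⁻¹' Q := by
    ext l
    simp only [Set.mem_preimage, MeasurableEquiv.finTwoArrow, Pset, Set.mem_setOf_eq, hQ]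
    constructor
    · rintro ⟨a, b, c, d, e⟩; exact ⟨a, b, c, d, e⟩
    · rintro ⟨a, b, c, d, e⟩; exact ⟨a, b, c, d, e⟩
  rw [hpre, (MeasureTheory.volume_preserving_finTwoArrow ℝ).measure_preimage
    hQmeas.nullMeasurableSet]
  have hvp : (MeasureTheory.volume : MeasureTheory.Measure (ℝ × ℝ))
      = MeasureTheory.volume.prod MeasureTheory.volume := rfl
  rw [hvp, MeasureTheory.Measure.prod_apply hQmeas]
  set M : ℝ := (N + 1) / 2 with hM
  have hM0 : (0 : ℝ) ≤ M := by rw [hM]; linarith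
  have hslice : ∀ z : ℝ, (Prod.mk z ⁻¹' Q) = if 0 ≤ z then Set.Icc 0 (f z) else ∅ := by
    intro z
    by_cases hz : 0 ≤ z
    · rw [if_pos hz]
      ext y
      simp only [Set.mem_preimage, hQ, Set.mem_setOf_eq, Set.mem_Icc, hf, le_min_iff]
      constructor
      · rintro ⟨_, h2, h3, h4, h5⟩
        exact ⟨h2, by linarith, by linarith, by linarith⟩
      · rintro ⟨h2, h3, h4, h5⟩
        exact ⟨hz, h2, by linarith, by linarith, by linarith⟩
    · rw [if_neg hz]
      ext y
      simp only [Set.mem_preimage, hQ, Set.mem_setOf_eq, Set.mem_empty_iff_false, iff_false]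
      rintro ⟨h1, _⟩
      exact hz h1
  have hslicevol : ∀ z : ℝ, MeasureTheory.volume (Prod.mk z ⁻¹' Q)
      = Set.indicator (Set.Icc (0 : ℝ) M) (fun z => ENNReal.ofReal (f z)) z := by
    intro z
    rw [hslice z]
    by_cases hz : 0 ≤ z
    · rw [if_pos hz, Real.volume_Icc, sub_zero]
      by_cases hzM : z ≤ M
      · rw [Set.indicator_of_mem (Set.mem_Icc.2 ⟨hz, hzM⟩)]
      · rw [Set.indicator_of_notMem (fun hmem => hzM (Set.mem_Icc.1 hmem).2)]
        rw [ENNReal.ofReal_eq_zero]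
        push_neg at hzM
        calc f z ≤ N + 1 - 2 * z := le_trans (min_le_right _ _) (min_le_left _ _)
          _ ≤ 0 := by rw [hM] at hzM; linarith
    · rw [if_neg hz, Set.indicator_of_notMem (fun hmem => hz (Set.mem_Icc.1 hmem).1)]
      exact MeasureTheory.measure_empty
  rw [MeasureTheory.lintegral_congr hslicevol,
    MeasureTheory.lintegral_indicator measurableSet_Icc _]
  have hint : MeasureTheory.IntegrableOn f (Set.Icc (0:ℝ) M) := hfc.integrableOn_Icc
  have hnn : 0 ≤ᵐ[MeasureTheory.volume.restrict (Set.Icc (0:ℝ) M)] f := by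
    refine MeasureTheory.ae_restrict_of_forall_mem measurableSet_Icc fun z hz => ?_
    obtain ⟨hz0, hzM⟩ := Set.mem_Icc.1 hz
    rw [hM] at hzM
    show (0:ℝ) ≤ f z
    exact le_min (by linarith) (le_min (by linarith) (by linarith))
  rw [← MeasureTheory.ofReal_integral_eq_lintegral_ofReal hint hnn]
  congr 1
  rw [MeasureTheory.integral_Icc_eq_integral_Ioc,
    ← intervalIntegral.integral_of_le hM0]
  have hii : ∀ a b : ℝ, IntervalIntegrable f MeasureTheory.volume a b :=
    fun a b => hfc.intervalIntegrable a b
  have hsplit2 : (∫ z in (1:ℝ)..(N/2), f z) + (∫ z in (N/2)..M, f z)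
      = ∫ z in (1:ℝ)..M, f z := intervalIntegral.integral_add_adjacent_intervals (hii _ _) (hii _ _)
  have hsplit1 : (∫ z in (0:ℝ)..1, f z) + (∫ z in (1:ℝ)..M, f z)
      = ∫ z in (0:ℝ)..M, f z := intervalIntegral.integral_add_adjacent_intervals (hii _ _) (hii _ _)
  rw [← hsplit1, ← hsplit2]
  have hI1 : (∫ z in (0:ℝ)..1, f z) = ∫ z in (0:ℝ)..1, ((N+1)/2 + (-1/2) * z) := by
    refine intervalIntegral.integral_congr fun z hz => ?_
    rw [Set.uIcc_of_le (by norm_num : (0:ℝ) ≤ 1), Set.mem_Icc] at hz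
    obtain ⟨h0, h1⟩ := hz
    show min ((N + 2) / 2 - z) (min (N + 1 - 2 * z) ((N + 1 - z) / 2)) = _
    rw [min_eq_right (by linarith : (N + 1 - z)/2 ≤ N + 1 - 2*z),
      min_eq_right (by linarith : (N + 1 - z)/2 ≤ (N + 2)/2 - z)]
    ring
  have hI2 : (∫ z in (1:ℝ)..(N/2), f z) = ∫ z in (1:ℝ)..(N/2), ((N+2)/2 + (-1) * z) := by
    refine intervalIntegral.integral_congr fun z hz => ?_
    rw [Set.uIcc_of_le (by linarith : (1:ℝ) ≤ N/2), Set.mem_Icc] at hz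
    obtain ⟨h0, h1⟩ := hz
    show min ((N + 2) / 2 - z) (min (N + 1 - 2 * z) ((N + 1 - z) / 2)) = _
    rw [min_eq_left (le_min (by linarith) (by linarith))]
    ring
  have hI3 : (∫ z in (N/2)..M, f z) = ∫ z in (N/2)..M, ((N+1) + (-2) * z) := by
    refine intervalIntegral.integral_congr fun z hz => ?_
    rw [Set.uIcc_of_le (by rw [hM]; linarith : N/2 ≤ M), Set.mem_Icc] at hz
    obtain ⟨h0, h1⟩ := hz
    show min ((N + 2) / 2 - z) (min (N + 1 - 2 * z) ((N + 1 - z) / 2)) = _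
    rw [min_eq_left (by linarith : N + 1 - 2*z ≤ (N + 1 - z)/2),
      min_eq_right (by linarith : N + 1 - 2*z ≤ (N + 2)/2 - z)]
    ring
  rw [hI1, hI2, hI3, lin_int, lin_int, lin_int, hM]
  ring


section Part6
variable {F : Type} [Field F] {n : ℕ}

lemma pset_subset (h2 : 2 ≤ n) (hn : 4 ≤ n) (G : Matrix (Fin 2) (Fin n) F)
    (hrecmem : ∀ (i : Fin 2) (R : Finset (Fin n)), Fin.castLE h2 i ∈ R → IsRecoverySet G i R)
    (hrec2 : ∀ (i : Fin 2) {a b : Fin n} (R : Finset (Fin n)), a ≠ b → a ∈ R → b ∈ R →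
      IsRecoverySet G i R) :
    Pset n ⊆ SRRG G := by
  intro l hl
  obtain ⟨h0, h1, hsum, h20, h02⟩ := hl
  have hnR : (4 : ℝ) ≤ (n : ℝ) := by exact_mod_cast hn
  set a := l 0 with ha
  set b := l 1 with hb
  set s := min a 1 with hs
  set t := min b 1 with ht
  set p := a - s with hp
  set r := b - t with hr
  set w0 := min p (1 - t) with hw0
  set w1 := min r (1 - s) with hw1
  set u0 := p - w0 with hu0
  set u1 := r - w1 with hu1
  have hs1 : s ≤ 1 := min_le_right _ _
  have ht1 : t ≤ 1 := min_le_right _ _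
  have hsa : s ≤ a := min_le_left _ _
  have htb : t ≤ b := min_le_left _ _
  have hs0 : 0 ≤ s := le_min h0 zero_le_one
  have ht0 : 0 ≤ t := le_min h1 zero_le_one
  have hp0 : 0 ≤ p := by rw [hp]; linarith
  have hr0 : 0 ≤ r := by rw [hr]; linarith
  have hw00 : 0 ≤ w0 := le_min hp0 (by linarith)
  have hw10 : 0 ≤ w1 := le_min hr0 (by linarith)
  have hw0p : w0 ≤ p := min_le_left _ _
  have hw1r : w1 ≤ r := min_le_left _ _
  have hw0t : w0 ≤ 1 - t := min_le_right _ _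
  have hw1s : w1 ≤ 1 - s := min_le_right _ _
  have hu00 : 0 ≤ u0 := by rw [hu0]; linarith
  have hu10 : 0 ≤ u1 := by rw [hu1]; linarith
  have hcap : 2 * u0 + 2 * u1 + w0 + w1 ≤ (n : ℝ) - 2 := by
    rcases le_total a 1 with hA | hA
    · have hsa' : s = a := by rw [hs]; exact min_eq_left hA
      rcases le_total b 1 with hB | hB
      · have htb' : t = b := by rw [ht]; exact min_eq_left hB
        rw [hu0, hu1]
        linarith
      · have htb' : t = 1 := by rw [ht]; exact min_eq_right hB
        rcases le_total r (1 - s) with hW | hW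
        · have hw1' : w1 = r := by rw [hw1]; exact min_eq_left hW
          rw [hu0, hu1]
          linarith
        · have hw1' : w1 = 1 - s := by rw [hw1]; exact min_eq_right hW
          rw [hu0, hu1]
          linarith
    · have hsa' : s = 1 := by rw [hs]; exact min_eq_right hA
      rcases le_total b 1 with hB | hB
      · have htb' : t = b := by rw [ht]; exact min_eq_left hB
        rcases le_total p (1 - t) with hW | hW
        · have hw0' : w0 = p := by rw [hw0]; exact min_eq_left hW
          rw [hu0, hu1]
          linarith
        · have hw0' : w0 = 1 - t := by rw [hw0]; exact min_eq_right hW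
          rw [hu0, hu1]
          linarith
      · have htb' : t = 1 := by rw [ht]; exact min_eq_right hB
        rcases le_total p (1 - t) with hWa | hWa <;>
          rcases le_total r (1 - s) with hWb | hWb
        · have hw0' : w0 = p := by rw [hw0]; exact min_eq_left hWa
          have hw1' : w1 = r := by rw [hw1]; exact min_eq_left hWb
          rw [hu0, hu1]; linarith
        · have hw0' : w0 = p := by rw [hw0]; exact min_eq_left hWa
          have hw1' : w1 = 1 - s := by rw [hw1]; exact min_eq_right hWb
          rw [hu0, hu1]; linarith
        · have hw0' : w0 = 1 - t := by rw [hw0]; exact min_eq_right hWa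
          have hw1' : w1 = r := by rw [hw1]; exact min_eq_left hWb
          rw [hu0, hu1]; linarith
        · have hw0' : w0 = 1 - t := by rw [hw0]; exact min_eq_right hWa
          have hw1' : w1 = 1 - s := by rw [hw1]; exact min_eq_right hWb
          rw [hu0, hu1]; linarith
  have hmem := mem_srrg h2 G hrecmem hrec2 hn s t u0 u1 w0 w1 hs0 ht0 hu00 hu10 hw00 hw10
    (by linarith) (by linarith) hcap
  have hl' : ![s + u0 + w0, t + u1 + w1] = l := by
    funext i
    fin_cases i
    · show s + u0 + w0 = a
      rw [hu0, hp]; ring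
    · show t + u1 + w1 = b
      rw [hu1, hr]; ring
  rwa [hl'] at hmem

end Part6

theorem stmt16 {F : Type} [Field F] [Fintype F] {n : ℕ} (hn : 4 ≤ n)
    (G : Matrix (Fin 2) (Fin n) F)
    (hcol : ∀ ν, matCol G ν ≠ 0)
    -- `G` is systematic: its first `2` columns form the identity matrix
    (hsys : ∀ j : Fin 2, matCol G (Fin.castLE (by omega) j) = Pi.single j 1)
    -- `G` is MDS: every `2` columns are linearly independent
    (hmds : ∀ S : Finset (Fin n), S.card = 2 →
      LinearIndependent F (fun ν : {x : Fin n // x ∈ S} => matCol G ν.1)) :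
    MeasureTheory.volume (SRRG G) =
      ENNReal.ofReal (((n : ℝ) ^ 2 + 4 * (n : ℝ)) / 8) := by
  have h2 : 2 ≤ n := by omega
  have hsys' : ∀ j : Fin 2, matCol G (Fin.castLE h2 j) = Pi.single j 1 := hsys
  have hrecmem : ∀ (i : Fin 2) (R : Finset (Fin n)), Fin.castLE h2 i ∈ R →
      IsRecoverySet G i R := fun i R h => rec_of_mem h2 G hsys' h
  have hrec2 : ∀ (i : Fin 2) {a b : Fin n} (R : Finset (Fin n)), a ≠ b → a ∈ R → b ∈ R →
      IsRecoverySet G i R := fun i {a b} R hab haR hbR => rec_of_two G hmds hab haR hbR i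
  have hchar : ∀ (i : Fin 2) (R : Finset (Fin n)), IsRecoverySet G i R →
      R = {Fin.castLE h2 i} ∨ 2 ≤ R.card := fun i R hrec => rec_char h2 G hsys' hmds hrec
  have hset : SRRG G = Pset n :=
    Set.Subset.antisymm (srrg_subset h2 G hchar) (pset_subset h2 hn G hrecmem hrec2)
  rw [hset]
  exact volume_pset hn
end

section
/- Suppose n ≥ 2k and let G ∈ F_q^{k×n} be a systematic MDS matrix. Then the max-sum capacity of the service rate region satisfies λ(G) = k + (n − k)/k, where λ(G) = max{ λ_1 + ... + λ_k : (λ_1,...,λ_k) ∈ Λ(G) }. -/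
open Matrix

lemma aux_span_top {F : Type} [Field F] {k n : ℕ} (hk : 0 < k)
    (G : Matrix (Fin k) (Fin n) F)
    (hmds : ∀ S : Finset (Fin n), S.card = k →
      LinearIndependent F (fun ν : {x : Fin n // x ∈ S} => matCol G ν.1))
    (S : Finset (Fin n)) (hS : S.card = k) :
    Submodule.span F (matCol G '' (S : Set (Fin n))) = ⊤ := by
  have li := hmds S hS
  have hpos : 0 < S.card := by omega
  obtain ⟨a, ha⟩ := Finset.card_pos.mp hpos
  have hne : Nonempty {x : Fin n // x ∈ S} := ⟨⟨a, ha⟩⟩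
  have h2 : Set.range (fun ν : {x : Fin n // x ∈ S} => matCol G ν.1)
      = matCol G '' (S : Set (Fin n)) := by
    ext w
    simp [Set.mem_image, Subtype.exists]
  have := li.span_eq_top_of_card_eq_finrank (by
    rw [Fintype.card_coe, hS, Module.finrank_fintype_fun_eq_card, Fintype.card_fin])
  rw [h2] at this
  exact this

lemma aux_card_ge {F : Type} [Field F] {k n : ℕ} (hkn' : k ≤ n)
    (G : Matrix (Fin k) (Fin n) F)
    (hmds : ∀ S : Finset (Fin n), S.card = k →
      LinearIndependent F (fun ν : {x : Fin n // x ∈ S} => matCol G ν.1))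
    (i : Fin k) (R : Finset (Fin n))
    (hrec : IsRecoverySet G i R) (hsysi : matCol G (Fin.castLE hkn' i) = Pi.single i 1)
    (hni : Fin.castLE hkn' i ∉ R) : k ≤ R.card := by
  by_contra hcon
  push_neg at hcon
  have h1 : (insert (Fin.castLE hkn' i) R).card ≤ k := by
    rw [Finset.card_insert_of_notMem hni]; omega
  obtain ⟨S, hsub, hScard⟩ := Finset.exists_superset_card_eq h1 (by
    simpa [Fintype.card_fin] using hkn')
  have li := hmds S hScard
  have hiS : Fin.castLE hkn' i ∈ S := hsub (Finset.mem_insert_self _ _)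
  have hns : (⟨Fin.castLE hkn' i, hiS⟩ : {x : Fin n // x ∈ S}) ∉
      {x : {x : Fin n // x ∈ S} | x.1 ∈ R} := hni
  have hnot := li.notMem_span_image (s := {x : {x : Fin n // x ∈ S} | x.1 ∈ R}) hns
  apply hnot
  have himg : (fun ν : {x : Fin n // x ∈ S} => matCol G ν.1) ''
      {x : {x : Fin n // x ∈ S} | x.1 ∈ R} = matCol G '' (R : Set (Fin n)) := by
    ext w
    constructor
    · rintro ⟨⟨ν, hν⟩, hR, rfl⟩; exact ⟨ν, hR, rfl⟩
    · rintro ⟨ν, hν, rfl⟩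
      exact ⟨⟨ν, hsub (Finset.mem_insert_of_mem hν)⟩, hν, rfl⟩
  rw [himg]
  show matCol G (Fin.castLE hkn' i) ∈ _
  rw [hsysi]
  exact hrec

lemma fiber_sum {α β : Type} [Fintype α] [Fintype β] [DecidableEq β] (g : α → β)
    (p : β → Prop) [DecidablePred p] :
    ∑ b : β, (if p b then ((Finset.univ.filter (fun a => g a = b)).card : ℝ) else 0)
    = ((Finset.univ.filter (fun a => p (g a))).card : ℝ) := by
  have h1 : ∀ b : β, (if p b then ((Finset.univ.filter (fun a => g a = b)).card : ℝ) else 0)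
      = ∑ a ∈ Finset.univ.filter (fun a => g a = b), (if p (g a) then (1:ℝ) else 0) := by
    intro b
    have h2 : ∀ a ∈ Finset.univ.filter (fun a => g a = b),
        (if p (g a) then (1:ℝ) else 0) = (if p b then (1:ℝ) else 0) := by
      intro a ha
      rw [(Finset.mem_filter.mp ha).2]
    rw [Finset.sum_congr rfl h2, Finset.sum_const, nsmul_eq_mul]
    split <;> simp
  rw [Finset.sum_congr rfl (fun b _ => h1 b), Finset.sum_fiberwise, Finset.card_filter]
  push_cast
  apply Finset.sum_congr rfl
  intro a _
  split <;> simp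

lemma ind_sum {β : Type} [Fintype β] [DecidableEq β] (q : β → Prop) [DecidablePred q]
    (c : β) :
    ∑ b : β, (if q b then (if b = c then (1:ℝ) else 0) else 0) = if q c then (1:ℝ) else 0 := by
  have h : ∀ b : β, (if q b then (if b = c then (1:ℝ) else 0) else 0)
      = (if b = c then (if q b then (1:ℝ) else 0) else 0) := by
    intro b; split <;> split <;> simp_all
  rw [Finset.sum_congr rfl (fun b _ => h b),
    Finset.sum_ite_eq' Finset.univ c (fun b => if q b then (1:ℝ) else 0)]
  simp

lemma aux_mem {F : Type} [Field F] {k n : ℕ} (hk : 2 ≤ k) (hkn : 2 * k ≤ n)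
    (G : Matrix (Fin k) (Fin n) F)
    (hsys : ∀ j : Fin k, matCol G (Fin.castLE (le_trans (Nat.le_mul_of_pos_left k (by norm_num)) hkn) j) = Pi.single j 1)
    (hmds : ∀ S : Finset (Fin n), S.card = k →
      LinearIndependent F (fun ν : {x : Fin n // x ∈ S} => matCol G ν.1)) :
    ∃ lam ∈ SRRG G, ((k : ℝ) + ((n : ℝ) - (k : ℝ)) / (k : ℝ)) = ∑ i, lam i := by
  have hkn' : k ≤ n := by omega
  have hk0 : (0:ℝ) < k := by positivity
  set m : ℕ := n - k with hm
  have hkm : k ≤ m := by omega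
  have hm0 : 0 < m := by omega
  haveI : NeZero m := ⟨by omega⟩
  set emb : ZMod m → Fin n := fun a => ⟨k + a.val, by have := ZMod.val_lt a; omega⟩ with hemb
  have emb_inj : Function.Injective emb := by
    intro a b h
    have h2 : k + a.val = k + b.val := congrArg Fin.val h
    exact ZMod.val_injective m (by omega)
  have cast_inj : ∀ t₁ t₂ : Fin k, ((t₁ : ℕ) : ZMod m) = ((t₂ : ℕ) : ZMod m) → t₁ = t₂ := by
    intro t₁ t₂ h
    have h1 : (((t₁ : ℕ) : ZMod m)).val = (((t₂ : ℕ) : ZMod m)).val := by rw [h]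
    rw [ZMod.val_cast_of_lt (by omega), ZMod.val_cast_of_lt (by omega)] at h1
    exact Fin.ext h1
  set window : ZMod m → Finset (Fin n) :=
    fun j => Finset.image (fun t : Fin k => emb (j + ((t : ℕ) : ZMod m))) Finset.univ
    with hwin
  have card_window : ∀ j, (window j).card = k := by
    intro j
    rw [hwin]
    rw [Finset.card_image_of_injective _ (fun t₁ t₂ h => by
      exact cast_inj t₁ t₂ (add_left_cancel (emb_inj h)))]
    simp
  have window_rec : ∀ (i : Fin k) (j : ZMod m), IsRecoverySet G i (window j) := by
    intro i j
    unfold IsRecoverySet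
    rw [aux_span_top (by omega) G hmds (window j) (card_window j)]
    trivial
  have window_ge : ∀ (j : ZMod m) (ν : Fin n), ν ∈ window j → k ≤ ν.val := by
    intro j ν hν
    rw [hwin] at hν
    simp only [Finset.mem_image] at hν
    obtain ⟨t, _, rfl⟩ := hν
    simp [hemb]
  have count_lem : ∀ ν : Fin n, k ≤ ν.val →
      ((Finset.univ.filter (fun j : ZMod m => ν ∈ window j)).card : ℕ) = k := by
    intro ν hν
    set c : ZMod m := ((ν.val - k : ℕ) : ZMod m) with hc
    have hembc : emb c = ν := by
      have hcv : c.val = ν.val - k := ZMod.val_cast_of_lt (by omega)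
      apply Fin.ext
      simp [hemb, hcv]
      omega
    have hfe : Finset.univ.filter (fun j : ZMod m => ν ∈ window j)
        = Finset.image (fun t : Fin k => c - ((t : ℕ) : ZMod m)) Finset.univ := by
      ext j
      simp only [Finset.mem_filter, Finset.mem_univ, true_and, Finset.mem_image, hwin]
      constructor
      · rintro ⟨t, ht⟩
        refine ⟨t, ?_⟩
        have : j + ((t : ℕ) : ZMod m) = c := emb_inj (by rw [ht, hembc])
        linear_combination -this
      · rintro ⟨t, rfl⟩
        refine ⟨t, ?_⟩
        rw [show c - ((t : ℕ) : ZMod m) + ((t : ℕ) : ZMod m) = c by ring, hembc]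
    rw [hfe, Finset.card_image_of_injective _ (fun t₁ t₂ h => by
      exact cast_inj t₁ t₂ (by linear_combination -h)), Finset.card_univ, Fintype.card_fin]
  set ι0 : Fin k := ⟨0, by omega⟩ with hι0
  set x : Fin k → Finset (Fin n) → ℝ := fun i R =>
    (if R = {Fin.castLE hkn' i} then (1 : ℝ) else 0) +
    (if i = ι0 then ((Finset.univ.filter (fun j : ZMod m => window j = R)).card : ℝ) / k
      else 0) with hx
  refine ⟨fun i => 1 + (if i = ι0 then (m : ℝ) / k else 0), ⟨x, ?_, ?_, ?_, ?_⟩, ?_⟩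
  · intro i R
    rw [hx]
    dsimp only
    refine add_nonneg ?_ ?_ <;> split <;> positivity
  · -- vanishing on non-recovery sets
    intro i R hnr
    have h1 : ¬ (R = {Fin.castLE hkn' i}) := by
      intro hR
      apply hnr
      subst hR
      unfold IsRecoverySet
      apply Submodule.subset_span
      exact ⟨Fin.castLE hkn' i, by simp, hsys i⟩
    have h2 : Finset.univ.filter (fun j : ZMod m => window j = R) = ∅ := by
      rw [Finset.filter_eq_empty_iff]
      intro j _ hj
      exact hnr (hj ▸ window_rec i j)
    rw [hx]
    simp [h1, h2]
  · -- row sums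
    intro i
    rw [hx]
    dsimp only
    rw [Finset.sum_add_distrib]
    congr 1
    · rw [Finset.sum_ite_eq' Finset.univ ({Fin.castLE hkn' i}) (fun _ => (1:ℝ))]
      simp
    · by_cases hi : i = ι0
      · simp only [hi, if_true]
        rw [← Finset.sum_div]
        congr 1
        rw [← Nat.cast_sum]
        congr 1
        have := Finset.card_eq_sum_card_fiberwise
          (f := window) (s := Finset.univ) (t := Finset.univ) (fun j _ => Finset.mem_univ _)
        rw [Finset.card_univ] at this
        simpa using this.symm
      · simp [hi]
  · -- capacity constraints
    intro ν
    have key : ∀ i : Fin k, ∑ R : Finset (Fin n), (if ν ∈ R then x i R else 0)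
        = (if ν = Fin.castLE hkn' i then (1:ℝ) else 0)
          + (if i = ι0 then
              ((Finset.univ.filter (fun j : ZMod m => ν ∈ window j)).card : ℝ) / k else 0) := by
      intro i
      have hsplit : ∑ R : Finset (Fin n), (if ν ∈ R then x i R else 0)
          = (∑ R : Finset (Fin n), (if ν ∈ R then
              (if R = {Fin.castLE hkn' i} then (1:ℝ) else 0) else 0))
          + (∑ R : Finset (Fin n), (if ν ∈ R then (if i = ι0 then
              ((Finset.univ.filter (fun j : ZMod m => window j = R)).card : ℝ) / k else 0)
              else 0)) := by
        rw [← Finset.sum_add_distrib]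
        apply Finset.sum_congr rfl
        intro R _
        rw [hx]
        dsimp only
        split <;> simp
      rw [hsplit]
      congr 1
      · rw [ind_sum (fun R : Finset (Fin n) => ν ∈ R) ({Fin.castLE hkn' i})]
        simp only [Finset.mem_singleton]
      · by_cases hi : i = ι0
        · simp only [hi, if_true]
          calc ∑ R : Finset (Fin n), (if ν ∈ R then
                  ((Finset.univ.filter (fun j : ZMod m => window j = R)).card : ℝ) / k else 0)
              = (∑ R : Finset (Fin n), (if ν ∈ R then
                  ((Finset.univ.filter (fun j : ZMod m => window j = R)).card : ℝ) else 0)) / k := by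
                rw [Finset.sum_div]
                exact Finset.sum_congr rfl (fun R _ => by split <;> simp)
            _ = _ := by rw [fiber_sum window (fun R : Finset (Fin n) => ν ∈ R)]
        · simp [hi]
    rw [Finset.sum_congr rfl (fun i _ => key i), Finset.sum_add_distrib,
      Finset.sum_ite_eq' Finset.univ ι0
        (fun _ => ((Finset.univ.filter (fun j : ZMod m => ν ∈ window j)).card : ℝ) / k)]
    simp only [Finset.mem_univ, if_true]
    by_cases hν : (ν : ℕ) < k
    · have hcnt : Finset.univ.filter (fun j : ZMod m => ν ∈ window j) = ∅ := by
        rw [Finset.filter_eq_empty_iff]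
        intro j _ hj
        exact absurd (window_ge j ν hj) (by omega)
      set i' : Fin k := ⟨ν.val, hν⟩ with hi'
      have hcond : ∀ i : Fin k, (ν = Fin.castLE hkn' i) ↔ (i = i') := by
        intro i
        constructor
        · intro h
          apply Fin.ext
          have := congrArg Fin.val h
          simpa [hi'] using this.symm
        · rintro rfl
          apply Fin.ext
          simp [hi']
      simp only [hcond]
      rw [Finset.sum_ite_eq' Finset.univ i' (fun _ => (1:ℝ))]
      simp [hcnt]
    · have hcnt := count_lem ν (by omega)
      have hz : ∀ i : Fin k, ¬ (ν = Fin.castLE hkn' i) := by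
        intro i h
        have := congrArg Fin.val h
        simp at this
        omega
      rw [Finset.sum_congr rfl (fun i _ => if_neg (hz i))]
      rw [hcnt]
      simp [ne_of_gt hk0]
  · -- total value
    rw [Finset.sum_add_distrib,
      Finset.sum_ite_eq' Finset.univ ι0 (fun _ => (m:ℝ)/k)]
    simp only [Finset.mem_univ, if_true, Finset.sum_const, Finset.card_univ, Fintype.card_fin,
      nsmul_eq_mul, mul_one]
    have hmc : ((m : ℕ) : ℝ) = (n : ℝ) - (k : ℝ) := by
      rw [hm]
      push_cast [Nat.cast_sub hkn']
      ring
    rw [hmc]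

lemma aux_ub {F : Type} [Field F] {k n : ℕ} (hk : 2 ≤ k) (hkn : 2 * k ≤ n)
    (G : Matrix (Fin k) (Fin n) F)
    (hsys : ∀ j : Fin k, matCol G (Fin.castLE (le_trans (Nat.le_mul_of_pos_left k (by norm_num)) hkn) j) = Pi.single j 1)
    (hmds : ∀ S : Finset (Fin n), S.card = k →
      LinearIndependent F (fun ν : {x : Fin n // x ∈ S} => matCol G ν.1))
    (lam : Fin k → ℝ) (hmem : lam ∈ SRRG G) :
    ∑ i, lam i ≤ (k : ℝ) + ((n : ℝ) - (k : ℝ)) / (k : ℝ) := by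
  have hkn' : k ≤ n := by omega
  have hk0 : (0:ℝ) < k := by positivity
  have hk2 : (2:ℝ) ≤ (k:ℝ) := by exact_mod_cast hk
  obtain ⟨x, hpos, hvan, hsum, hcap⟩ := hmem
  set νi : Fin k → Fin n := fun i => Fin.castLE hkn' i with hνi
  set A : Fin k → ℝ := fun i => ∑ R ∈ Finset.univ.filter (fun R => νi i ∈ R), x i R with hA
  set B : Fin k → ℝ := fun i => ∑ R ∈ Finset.univ.filter (fun R => νi i ∉ R), x i R with hB
  have hAB : ∀ i, A i + B i = lam i := by
    intro i
    rw [hA, hB]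
    dsimp only
    rw [Finset.sum_filter_add_sum_filter_not]
    exact hsum i
  have hBpos : ∀ i, 0 ≤ B i := fun i => Finset.sum_nonneg (fun R _ => hpos i R)
  have hA1 : ∀ i, A i ≤ 1 := by
    intro i
    calc A i = ∑ R : Finset (Fin n), (if νi i ∈ R then x i R else 0) := by
          rw [hA]; dsimp only; rw [Finset.sum_filter]
      _ ≤ ∑ i', ∑ R : Finset (Fin n), (if νi i ∈ R then x i' R else 0) := by
          apply Finset.single_le_sum (f := fun i' =>
            ∑ R : Finset (Fin n), (if νi i ∈ R then x i' R else 0))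
          · intro i' _
            apply Finset.sum_nonneg
            intro R _
            split
            · exact hpos i' R
            · exact le_refl 0
          · exact Finset.mem_univ i
      _ ≤ 1 := hcap (νi i)
  have htot : ∑ i, ∑ R : Finset (Fin n), (R.card : ℝ) * x i R ≤ n := by
    have h1 : ∀ i (R : Finset (Fin n)), (R.card : ℝ) * x i R
        = ∑ ν : Fin n, (if ν ∈ R then x i R else 0) := by
      intro i R
      rw [Finset.sum_ite_mem, Finset.univ_inter, Finset.sum_const, nsmul_eq_mul]
    calc ∑ i, ∑ R : Finset (Fin n), (R.card : ℝ) * x i R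
        = ∑ i, ∑ R : Finset (Fin n), ∑ ν : Fin n, (if ν ∈ R then x i R else 0) := by
          exact Finset.sum_congr rfl (fun i _ => Finset.sum_congr rfl (fun R _ => h1 i R))
      _ = ∑ i, ∑ ν : Fin n, ∑ R : Finset (Fin n), (if ν ∈ R then x i R else 0) := by
          refine Finset.sum_congr rfl (fun i _ => ?_)
          exact Finset.sum_comm
      _ = ∑ ν : Fin n, ∑ i, ∑ R : Finset (Fin n), (if ν ∈ R then x i R else 0) := by
          exact Finset.sum_comm
      _ ≤ ∑ _ν : Fin n, (1:ℝ) := Finset.sum_le_sum (fun ν _ => hcap ν)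
      _ = n := by simp
  have key : ∀ i, A i + (k:ℝ) * B i ≤ ∑ R : Finset (Fin n), (R.card : ℝ) * x i R := by
    intro i
    rw [← Finset.sum_filter_add_sum_filter_not Finset.univ (fun R => νi i ∈ R)
      (fun R => (R.card : ℝ) * x i R)]
    apply add_le_add
    · rw [hA]
      dsimp only
      apply Finset.sum_le_sum
      intro R hR
      have hmem : νi i ∈ R := (Finset.mem_filter.mp hR).2
      have hcard : 1 ≤ (R.card : ℝ) := by
        have : 0 < R.card := Finset.card_pos.mpr ⟨νi i, hmem⟩
        exact_mod_cast this
      nlinarith [hpos i R]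
    · rw [hB, Finset.mul_sum]
      apply Finset.sum_le_sum
      intro R hR
      have hni : νi i ∉ R := (Finset.mem_filter.mp hR).2
      by_cases hxz : x i R = 0
      · rw [hxz]; simp
      · have hrec : IsRecoverySet G i R := by
          by_contra hnr
          exact hxz (hvan i R hnr)
        have hcard : (k:ℝ) ≤ (R.card : ℝ) := by
          exact_mod_cast aux_card_ge hkn' G hmds i R hrec (hsys i) hni
        have := hpos i R
        nlinarith
  have h1 : ∑ i, A i + (k:ℝ) * ∑ i, B i ≤ n := by
    calc ∑ i, A i + (k:ℝ) * ∑ i, B i = ∑ i, (A i + (k:ℝ) * B i) := by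
          rw [Finset.sum_add_distrib, Finset.mul_sum]
      _ ≤ ∑ i, ∑ R : Finset (Fin n), (R.card : ℝ) * x i R := Finset.sum_le_sum (fun i _ => key i)
      _ ≤ n := htot
  have h2 : ∑ i, A i ≤ (k:ℝ) := by
    calc ∑ i, A i ≤ ∑ _i : Fin k, (1:ℝ) := Finset.sum_le_sum (fun i _ => hA1 i)
      _ = k := by simp
  have h3 : 0 ≤ ∑ i, B i := Finset.sum_nonneg (fun i _ => hBpos i)
  have hsl : ∑ i, lam i = ∑ i, A i + ∑ i, B i := by
    rw [← Finset.sum_add_distrib]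
    exact (Finset.sum_congr rfl (fun i _ => (hAB i))).symm
  rw [hsl]
  set S1 := ∑ i, A i
  set S2 := ∑ i, B i
  have hfin : (S1 + S2) * (k:ℝ) ≤ (k:ℝ) * (k:ℝ) + ((n:ℝ) - (k:ℝ)) := by
    nlinarith [mul_nonneg (sub_nonneg.mpr (by linarith : (1:ℝ) ≤ (k:ℝ)))
      (sub_nonneg.mpr h2)]
  calc S1 + S2 = ((S1 + S2) * (k:ℝ)) / (k:ℝ) := by field_simp
    _ ≤ ((k:ℝ) * (k:ℝ) + ((n:ℝ) - (k:ℝ))) / (k:ℝ) := (div_le_div_iff_of_pos_right hk0).mpr hfin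
    _ = (k:ℝ) + ((n:ℝ) - (k:ℝ)) / (k:ℝ) := by field_simp

theorem stmt19 {F : Type} [Field F] [Fintype F] {k n : ℕ}
    (hk : 2 ≤ k) (hkn : 2 * k ≤ n)
    (G : Matrix (Fin k) (Fin n) F)
    (hcol : ∀ ν, matCol G ν ≠ 0)
    -- `G` is systematic: its first `k` columns form the identity matrix
    (hsys : ∀ j : Fin k, matCol G (Fin.castLE (by omega) j) = Pi.single j 1)
    -- `G` is MDS: every `k` columns are linearly independent
    (hmds : ∀ S : Finset (Fin n), S.card = k →
      LinearIndependent F (fun ν : {x : Fin n // x ∈ S} => matCol G ν.1))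
    -- `lmax = λ(G)`, the max-sum capacity
    (lmax : ℝ) (hlmax : IsGreatest {y : ℝ | ∃ lam ∈ SRRG G, y = ∑ i, lam i} lmax) :
    lmax = (k : ℝ) + ((n : ℝ) - (k : ℝ)) / (k : ℝ) := by
  apply le_antisymm
  · obtain ⟨lam, hmem, heq⟩ := hlmax.1
    rw [heq]
    exact aux_ub hk hkn G hsys hmds lam hmem
  · obtain ⟨lam, hmem, heq⟩ := aux_mem hk hkn G hsys hmds
    exact hlmax.2 ⟨lam, hmem, heq⟩
end
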